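/- arXiv:0804.0631 — 8 statements merged into one kernel-verified Lean document; each statement's English description precedes it below -/
import Mathlib

section
/- Let ε, δ ∈ {1, −1} and N ≥ 1. Suppose φ_1, …, φ_N : ℤ × ℝ × ℝ → ℝ are twice continuously differentiable in (x,s), λ_{ij} : ℝ → ℝ and μ_{ij} : ℝ → ℝ (1 ≤ i,j ≤ N) are functions, and for all n ∈ ℤ, x, s ∈ ℝ and 1 ≤ i ≤ N: ∂φ_i(n,x,s)/∂x = ε φ_i(n+δ,x,s) + Σ_{j=1}^N λ_{ij}(x) φ_j(n,x,s) and ∂φ_i(n,x,s)/∂s = −ε φ_i(n−δ,x,s) + Σ_{j=1}^N μ_{ij}(s) φ_j(n,x,s). Then the Casorati determinant τ_n(x,s) = det( (φ_i(n+j−1,x,s))_{1≤i,j≤N} ) solves the bilinear 2D Toda lattice equation: ∂²τ_n/∂s∂x · τ_n − (∂τ_n/∂s)(∂τ_n/∂x) = τ_{n+1} τ_{n−1} − τ_n² for all n, x, s. -/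
open Matrix

open Matrix in
theorem det_real {N : ℕ} (M : Matrix (Fin N) (Fin N) ℝ) :
    M.det = ∑ σ : Equiv.Perm (Fin N), ((Equiv.Perm.sign σ : ℤ) : ℝ) * ∏ i, M (σ i) i := by
  rw [Matrix.det_apply]
  refine Finset.sum_congr rfl fun σ _ => ?_
  rw [Units.smul_def, zsmul_eq_mul]

open Matrix in
theorem hasDerivAt_det {N : ℕ} (F : Fin N → Fin N → ℝ → ℝ) (F' : Fin N → Fin N → ℝ) (t : ℝ)
    (h : ∀ i j, HasDerivAt (fun u => F i j u) (F' i j) t) :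
    HasDerivAt (fun u => Matrix.det (Matrix.of fun i j => F i j u))
      (∑ j, Matrix.det ((Matrix.of fun i k => F i k t).updateCol j (fun i => F' i j))) t := by
  have key : ∀ j : Fin N,
      Matrix.det ((Matrix.of fun i k => F i k t).updateCol j (fun i => F' i j))
      = ∑ σ : Equiv.Perm (Fin N), ((Equiv.Perm.sign σ : ℤ) : ℝ) *
          (F' (σ j) j * ∏ k ∈ Finset.univ.erase j, F (σ k) k t) := by
    intro j
    rw [det_real]
    refine Finset.sum_congr rfl fun σ _ => ?_
    congr 1
    have : ∀ i : Fin N, ((Matrix.of fun i k => F i k t).updateCol j (fun i => F' i j)) (σ i) i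
        = Function.update (fun i => F (σ i) i t) j (F' (σ j) j) i := by
      intro i
      rw [Matrix.updateCol_apply, Function.update_apply]
      by_cases hij : i = j
      · subst hij; simp
      · simp [hij]
    rw [Finset.prod_congr rfl (fun i _ => this i),
      Finset.prod_update_of_mem (Finset.mem_univ j)]
    congr 1
    exact Finset.prod_congr (by ext k; simp [Finset.mem_erase, and_comm]) fun _ _ => rfl
  have main : HasDerivAt (fun u => Matrix.det (Matrix.of fun i j => F i j u))
      (∑ σ : Equiv.Perm (Fin N), ((Equiv.Perm.sign σ : ℤ) : ℝ) *
        (∑ j, (∏ k ∈ Finset.univ.erase j, F (σ k) k t) • F' (σ j) j)) t := by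
    have : (fun u => Matrix.det (Matrix.of fun i j => F i j u))
        = fun u => ∑ σ : Equiv.Perm (Fin N), ((Equiv.Perm.sign σ : ℤ) : ℝ) * ∏ i, F (σ i) i u := by
      funext u; rw [det_real]; rfl
    rw [this]
    exact HasDerivAt.fun_sum fun σ _ =>
      (HasDerivAt.fun_finsetProd (fun i _ => h (σ i) i)).const_mul _
  convert main using 1
  simp only [key, Finset.mul_sum, smul_eq_mul]
  rw [Finset.sum_comm]
  refine Finset.sum_congr rfl fun σ _ => Finset.sum_congr rfl fun j _ => ?_
  ring
open Matrix

def gmat {N : ℕ} (φ : Fin N → ℤ → ℝ → ℝ → ℝ) (c : Fin N → ℤ) (x s : ℝ) :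
    Matrix (Fin N) (Fin N) ℝ := Matrix.of fun i j => φ i (c j) x s

def gdet {N : ℕ} (φ : Fin N → ℤ → ℝ → ℝ → ℝ) (c : Fin N → ℤ) (x s : ℝ) : ℝ :=
  (gmat φ c x s).det

theorem gdet_dup {N : ℕ} (φ : Fin N → ℤ → ℝ → ℝ → ℝ) {c : Fin N → ℤ} {j k : Fin N}
    (hjk : j ≠ k) (hc : c j = c k) (x s : ℝ) : gdet φ c x s = 0 :=
  Matrix.det_zero_of_column_eq hjk (fun i => by simp [gmat, hc])

theorem gdet_perm {N : ℕ} (φ : Fin N → ℤ → ℝ → ℝ → ℝ) (c : Fin N → ℤ)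
    (σ : Equiv.Perm (Fin N)) (x s : ℝ) :
    gdet φ (c ∘ σ) x s = ((Equiv.Perm.sign σ : ℤ) : ℝ) * gdet φ c x s := by
  have : gmat φ (c ∘ σ) x s = (gmat φ c x s).submatrix id σ := rfl
  rw [gdet, this, Matrix.det_permute']
  norm_num [gdet]

theorem gmat_updateColumn {N : ℕ} (φ : Fin N → ℤ → ℝ → ℝ → ℝ) (c : Fin N → ℤ)
    (j : Fin N) (m : ℤ) (x s : ℝ) :
    (gmat φ c x s).updateCol j (fun i => φ i m x s)
      = gmat φ (Function.update c j m) x s := by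
  ext i k
  rw [Matrix.updateCol_apply]
  by_cases h : k = j <;> simp [gmat, h]

/-- the trace trick -/
theorem sum_det_updateColumn_mulVec {N : ℕ} (M L : Matrix (Fin N) (Fin N) ℝ) :
    ∑ j, (M.updateCol j (fun i => ∑ k, L i k * M k j)).det = (∑ k, L k k) * M.det := by
  have h1 : ∀ j : Fin N, (M.updateCol j (fun i => ∑ k, L i k * M k j)).det
      = ∑ k, M k j * Matrix.cramer M (fun i => L i k) j := by
    intro j
    rw [← Matrix.cramer_apply]
    have : (fun i => ∑ k, L i k * M k j) = ∑ k, M k j • (fun i => L i k) := by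
      funext i
      simp [Finset.sum_apply, mul_comm]
    rw [this, map_sum, Finset.sum_apply]
    refine Finset.sum_congr rfl fun k _ => ?_
    have := (Matrix.cramer M).map_smul (M k j) (fun i => L i k)
    rw [this]
    simp
  simp only [h1]
  rw [Finset.sum_comm]
  have h2 : ∀ k : Fin N, ∑ j, M k j * Matrix.cramer M (fun i => L i k) j
      = M.det * L k k := by
    intro k
    have := congrFun (Matrix.mulVec_cramer M (fun i => L i k)) k
    simpa [Matrix.mulVec, dotProduct] using this
  simp only [h2]
  rw [Finset.sum_mul]
  exact Finset.sum_congr rfl fun k _ => mul_comm _ _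
open Matrix

theorem syzygy {N : ℕ} (u : Fin (N + 1) → Fin N → ℝ) (L : (Fin N → ℝ) →ₗ[ℝ] ℝ) :
    ∑ k : Fin (N + 1), (-1 : ℝ) ^ (k : ℕ) * L (u k) *
      Matrix.det (Matrix.of fun i j => u (Fin.succAbove k j) i) = 0 := by
  classical
  set A : Matrix (Fin (N + 1)) (Fin (N + 1)) ℝ :=
    Matrix.of fun i j => if h : (i : ℕ) < N then u j ⟨(i : ℕ), h⟩ else L (u j) with hA
  -- the last row is a linear combination of the other rows
  have hdet0 : A.det = 0 := by
    set c : Fin (N + 1) → ℝ := fun k =>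
      if h : (k : ℕ) < N then L (fun j => if (⟨(k : ℕ), h⟩ : Fin N) = j then 1 else 0) else 0
      with hc
    have hrow : A (Fin.last N) = ∑ k, c k • A k := by
      funext j
      have := LinearMap.pi_apply_eq_sum_univ L (u j)
      simp only [Finset.sum_apply, Pi.smul_apply, smul_eq_mul]
      rw [Fin.sum_univ_castSucc]
      have hlast : c (Fin.last N) * A (Fin.last N) j = 0 := by
        simp [hc, Fin.last]
      rw [hlast, add_zero]
      have hAl : A (Fin.last N) j = L (u j) := by simp [hA, Fin.last]
      rw [hAl, this]
      refine Finset.sum_congr rfl fun i _ => ?_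
      have h1 : ((Fin.castSucc i : Fin (N+1)) : ℕ) < N := by simp [Fin.castSucc, i.isLt]
      simp only [hc, hA, Matrix.of_apply, dif_pos h1, smul_eq_mul]
      have h2 : (⟨((Fin.castSucc i : Fin (N+1)) : ℕ), h1⟩ : Fin N) = i := Fin.ext (by simp)
      rw [h2, mul_comm]
    calc A.det = (A.updateRow (Fin.last N) (∑ k, c k • A k)).det := by
          rw [← hrow, Matrix.updateRow_eq_self]
      _ = c (Fin.last N) • A.det := Matrix.det_updateRow_sum A (Fin.last N) c
      _ = 0 := by simp [hc, Fin.last]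
  have hexp := Matrix.det_succ_row A (Fin.last N)
  rw [hdet0] at hexp
  have hterm : ∀ j : Fin (N + 1),
      (-1 : ℝ) ^ ((Fin.last N : ℕ) + (j : ℕ)) * A (Fin.last N) j *
        (A.submatrix (Fin.last N).succAbove j.succAbove).det
      = (-1 : ℝ) ^ N * ((-1 : ℝ) ^ (j : ℕ) * L (u j) *
          Matrix.det (Matrix.of fun i k => u (Fin.succAbove j k) i)) := by
    intro j
    have h1 : A (Fin.last N) j = L (u j) := by simp [hA, Fin.last]
    have h2 : A.submatrix (Fin.last N).succAbove j.succAbove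
        = Matrix.of fun i k => u (Fin.succAbove j k) i := by
      ext i k
      have : (Fin.last N).succAbove i = Fin.castSucc i := by rw [Fin.succAbove_last]
      simp only [Matrix.submatrix_apply, this, hA, Matrix.of_apply]
      have hlt : ((Fin.castSucc i : Fin (N+1)) : ℕ) < N := by simp [i.isLt]
      rw [dif_pos hlt]
      have h3 : (⟨((Fin.castSucc i : Fin (N+1)) : ℕ), hlt⟩ : Fin N) = i := Fin.ext rfl
      rw [h3]
    rw [h1, h2, pow_add, Fin.val_last]
    ring
  rw [Finset.sum_congr rfl (fun j _ => hterm j), ← Finset.mul_sum] at hexp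
  rcases mul_eq_zero.mp hexp.symm with h | h
  · exact absurd h (by positivity <;> simp)
  · exact h

theorem gdet_def {N : ℕ} (φ : Fin N → ℤ → ℝ → ℝ → ℝ) (c : Fin N → ℤ) (x s : ℝ) :
    gdet φ c x s = Matrix.det (Matrix.of fun i j : Fin N => φ i (c j) x s) := rfl

theorem gdet_syzygy {N : ℕ} (φ : Fin (N+1) → ℤ → ℝ → ℝ → ℝ) (e : Fin (N+1) → ℤ)
    (d : Fin (N+2) → ℤ) (x s : ℝ) :
    ∑ k : Fin (N + 2), (-1 : ℝ) ^ (k : ℕ) * gdet φ (Function.update e 0 (d k)) x s *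
      gdet φ (fun j => d (Fin.succAbove k j)) x s = 0 := by
  have h := syzygy (N := N+1) (fun k i => φ i (d k) x s)
    ((LinearMap.proj 0).comp (Matrix.cramer (gmat φ e x s)))
  rw [← h]
  refine Finset.sum_congr rfl fun k _ => ?_
  have h1 : gdet φ (Function.update e 0 (d k)) x s
      = ((LinearMap.proj (0 : Fin (N+1))).comp (Matrix.cramer (gmat φ e x s)))
          (fun i => φ i (d k) x s) := by
    rw [gdet, ← gmat_updateColumn, LinearMap.comp_apply, LinearMap.proj_apply,
      Matrix.cramer_apply]
  rw [h1]
  rfl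


section Deriv

variable {N : ℕ} {ε : ℝ} {δ : ℤ} {φ : Fin N → ℤ → ℝ → ℝ → ℝ}
  {lam mu : Fin N → Fin N → ℝ → ℝ}

theorem gdet_hasDerivAt_x
    (hreg : ∀ i n, ContDiff ℝ 2 (fun p : ℝ × ℝ => φ i n p.1 p.2))
    (hx : ∀ i n (x s : ℝ), deriv (fun x' => φ i n x' s) x =
        ε * φ i (n + δ) x s + ∑ j, lam i j x * φ j n x s)
    (c : Fin N → ℤ) (x s : ℝ) :
    HasDerivAt (fun x' => gdet φ c x' s)
      (ε * ∑ j, gdet φ (Function.update c j (c j + δ)) x s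
        + (∑ k, lam k k x) * gdet φ c x s) x := by
  have hentry : ∀ i j : Fin N, HasDerivAt (fun x' => φ i (c j) x' s)
      (ε * φ i (c j + δ) x s + ∑ k, lam i k x * φ k (c j) x s) x := by
    intro i j
    have h1 : Differentiable ℝ (fun p : ℝ × ℝ => φ i (c j) p.1 p.2) :=
      (hreg i (c j)).differentiable (by norm_num)
    have hd : DifferentiableAt ℝ (fun x' => φ i (c j) x' s) x :=
      (h1 (x, s)).comp (f := fun x' : ℝ => (x', s)) x (differentiableAt_id.prodMk (differentiableAt_const s))
    have := hd.hasDerivAt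
    rwa [hx i (c j) x s] at this
  have main := hasDerivAt_det (fun i j => fun x' => φ i (c j) x' s)
    (fun i j => ε * φ i (c j + δ) x s + ∑ k, lam i k x * φ k (c j) x s) x hentry
  convert main using 1
  · rfl
  have hsplit : ∀ j : Fin N,
      Matrix.det ((Matrix.of fun i k => φ i (c k) x s).updateCol j
        (fun i => ε * φ i (c j + δ) x s + ∑ k, lam i k x * φ k (c j) x s))
      = ε * gdet φ (Function.update c j (c j + δ)) x s
        + Matrix.det ((gmat φ c x s).updateCol j (fun i => ∑ k, lam i k x * φ k (c j) x s)) := by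
    intro j
    have e1 : (fun i => ε * φ i (c j + δ) x s + ∑ k, lam i k x * φ k (c j) x s)
        = (fun i => ε * φ i (c j + δ) x s) + fun i => ∑ k, lam i k x * φ k (c j) x s := rfl
    have e2 : (fun i => ε * φ i (c j + δ) x s) = ε • fun i => φ i (c j + δ) x s := rfl
    have hM : (Matrix.of fun i k => φ i (c k) x s) = gmat φ c x s := rfl
    rw [hM, e1, Matrix.det_updateCol_add, e2, Matrix.det_updateCol_smul,
      gmat_updateColumn]
    rfl
  rw [Finset.sum_congr rfl fun j _ => hsplit j, Finset.sum_add_distrib, Finset.mul_sum]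
  congr 1
  exact (sum_det_updateColumn_mulVec (gmat φ c x s) (Matrix.of fun i k => lam i k x)).symm

theorem gdet_hasDerivAt_s
    (hreg : ∀ i n, ContDiff ℝ 2 (fun p : ℝ × ℝ => φ i n p.1 p.2))
    (hs : ∀ i n (x s : ℝ), deriv (fun s' => φ i n x s') s =
        -ε * φ i (n - δ) x s + ∑ j, mu i j s * φ j n x s)
    (c : Fin N → ℤ) (x s : ℝ) :
    HasDerivAt (fun s' => gdet φ c x s')
      (-ε * ∑ j, gdet φ (Function.update c j (c j - δ)) x s
        + (∑ k, mu k k s) * gdet φ c x s) s := by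
  have hentry : ∀ i j : Fin N, HasDerivAt (fun s' => φ i (c j) x s')
      (-ε * φ i (c j - δ) x s + ∑ k, mu i k s * φ k (c j) x s) s := by
    intro i j
    have h1 : Differentiable ℝ (fun p : ℝ × ℝ => φ i (c j) p.1 p.2) :=
      (hreg i (c j)).differentiable (by norm_num)
    have hd : DifferentiableAt ℝ (fun s' => φ i (c j) x s') s :=
      (h1 (x, s)).comp (f := fun s' : ℝ => (x, s')) s ((differentiableAt_const x).prodMk differentiableAt_id)
    have := hd.hasDerivAt
    rwa [hs i (c j) x s] at this
  have main := hasDerivAt_det (fun i j => fun s' => φ i (c j) x s')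
    (fun i j => -ε * φ i (c j - δ) x s + ∑ k, mu i k s * φ k (c j) x s) s hentry
  convert main using 1
  · rfl
  have hsplit : ∀ j : Fin N,
      Matrix.det ((Matrix.of fun i k => φ i (c k) x s).updateCol j
        (fun i => -ε * φ i (c j - δ) x s + ∑ k, mu i k s * φ k (c j) x s))
      = -ε * gdet φ (Function.update c j (c j - δ)) x s
        + Matrix.det ((gmat φ c x s).updateCol j (fun i => ∑ k, mu i k s * φ k (c j) x s)) := by
    intro j
    have e1 : (fun i => -ε * φ i (c j - δ) x s + ∑ k, mu i k s * φ k (c j) x s)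
        = (fun i => -ε * φ i (c j - δ) x s) + fun i => ∑ k, mu i k s * φ k (c j) x s := rfl
    have e2 : (fun i => -ε * φ i (c j - δ) x s) = (-ε) • fun i => φ i (c j - δ) x s := rfl
    have hM : (Matrix.of fun i k => φ i (c k) x s) = gmat φ c x s := rfl
    rw [hM, e1, Matrix.det_updateCol_add, e2, Matrix.det_updateCol_smul,
      gmat_updateColumn]
    rfl
  rw [Finset.sum_congr rfl fun j _ => hsplit j, Finset.sum_add_distrib, Finset.mul_sum]
  congr 1
  exact (sum_det_updateColumn_mulVec (gmat φ c x s) (Matrix.of fun i k => mu i k s)).symm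

end Deriv

-- collapse of the +1 sum
theorem collapseX {M : ℕ} (φ : Fin (M+1) → ℤ → ℝ → ℝ → ℝ) (c : Fin (M+1) → ℤ)
    (n : ℤ) (hc : ∀ j, c j = n + (j : ℤ)) (x s : ℝ) :
    ∑ j, gdet φ (Function.update c j (c j + 1)) x s
      = gdet φ (Function.update c (Fin.last M) (c (Fin.last M) + 1)) x s := by
  refine Finset.sum_eq_single (Fin.last M) (fun j _ hj => ?_) (by simp)
  have hjM : (j : ℕ) < M := by
    rcases lt_or_eq_of_le (Nat.lt_succ_iff.mp j.isLt) with h | h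
    · exact h
    · exact absurd (Fin.ext h : j = Fin.last M) hj
  set k : Fin (M+1) := ⟨(j : ℕ) + 1, by omega⟩ with hk
  have hjk : j ≠ k := Fin.ne_of_val_ne (by simp [hk])
  refine gdet_dup φ hjk ?_ x s
  rw [Function.update_self, Function.update_of_ne (Ne.symm hjk), hc j, hc k]
  simp [hk]
  push_cast
  ring

-- collapse of the -1 sum
theorem collapseY {M : ℕ} (φ : Fin (M+1) → ℤ → ℝ → ℝ → ℝ) (c : Fin (M+1) → ℤ)
    (n : ℤ) (hc : ∀ j, c j = n + (j : ℤ)) (x s : ℝ) :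
    ∑ j, gdet φ (Function.update c j (c j - 1)) x s
      = gdet φ (Function.update c 0 (c 0 - 1)) x s := by
  refine Finset.sum_eq_single 0 (fun j _ hj => ?_) (by simp)
  have hj0 : 0 < (j : ℕ) := by
    rcases Nat.eq_zero_or_pos (j : ℕ) with h | h
    · exact absurd (Fin.ext h : j = 0) hj
    · exact h
  set k : Fin (M+1) := ⟨(j : ℕ) - 1, by omega⟩ with hk
  have hjk : j ≠ k := Fin.ne_of_val_ne (by simp [hk]; omega)
  refine gdet_dup φ hjk ?_ x s
  rw [Function.update_self, Function.update_of_ne (Ne.symm hjk), hc j, hc k]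
  simp [hk]
  have : ((j : ℕ) - 1 : ℕ) = ((j:ℕ) - 1 : ℤ) := by push_cast [hj0]; omega
  rw [this]; ring

/-- The Plücker-type identity `Z·τ = X·Y − τ₊·τ₋` for `N = m+2`. -/
theorem plucker_identity {m : ℕ} (φ : Fin (m+2) → ℤ → ℝ → ℝ → ℝ) (n : ℤ) (x s : ℝ)
    (cc cX cY cZ : Fin (m+2) → ℤ)
    (hcc : cc = fun j : Fin (m+2) => n + (j : ℤ))
    (hcX : cX = Function.update cc (Fin.last (m+1)) (cc (Fin.last (m+1)) + 1))
    (hcY : cY = Function.update cc 0 (cc 0 - 1))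
    (hcZ : cZ = Function.update cX 0 (cX 0 - 1)) :
    gdet φ cZ x s * gdet φ cc x s
      = gdet φ cX x s * gdet φ cY x s
        - gdet φ (fun j : Fin (m+2) => (n+1) + (j : ℤ)) x s *
            gdet φ (fun j : Fin (m+2) => (n-1) + (j : ℤ)) x s := by
  -- value lemmas for the column index functions
  have hccv : ∀ j : Fin (m+2), cc j = n + (j : ℤ) := fun j => by rw [hcc]
  have hlastval : ((Fin.last (m+1) : Fin (m+2)) : ℕ) = m + 1 := rfl
  have h0val : ((0 : Fin (m+2)) : ℕ) = 0 := rfl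
  have hcXv : ∀ j : Fin (m+2), (j : ℕ) ≠ m + 1 → cX j = n + (j : ℤ) := by
    intro j hj
    rw [hcX, Function.update_of_ne (Fin.ne_of_val_ne (by rw [hlastval]; exact hj)), hccv]
  have hcXl : cX (Fin.last (m+1)) = n + (m : ℤ) + 2 := by
    rw [hcX, Function.update_self, hccv]
    rw [Fin.val_last]; push_cast; ring
  have hcYv : ∀ j : Fin (m+2), (j : ℕ) ≠ 0 → cY j = n + (j : ℤ) := by
    intro j hj
    rw [hcY, Function.update_of_ne (Fin.ne_of_val_ne (by rw [h0val]; exact hj)), hccv]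
  have hcY0 : cY 0 = n - 1 := by
    rw [hcY, Function.update_self, hccv]; simp
  have h0nelast : ((0 : Fin (m+2)) : ℕ) ≠ m + 1 := by omega
  have hcZv : ∀ j : Fin (m+2), (j : ℕ) ≠ 0 → (j : ℕ) ≠ m + 1 → cZ j = n + (j : ℤ) := by
    intro j hj hj'
    rw [hcZ, Function.update_of_ne (Fin.ne_of_val_ne (by rw [h0val]; exact hj)), hcXv j hj']
  have hcZ0 : cZ 0 = n - 1 := by
    rw [hcZ, Function.update_self, hcXv 0 h0nelast]; simp
  have hcZl : cZ (Fin.last (m+1)) = n + (m : ℤ) + 2 := by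
    rw [hcZ, Function.update_of_ne (Fin.ne_of_val_ne (by rw [hlastval, h0val]; omega)), hcXl]
  -- the extended column family
  set d : Fin (m+3) → ℤ := fun k =>
    if (k : ℕ) = 0 then n - 1 else if (k : ℕ) = m + 2 then n + (m : ℤ) + 2
      else n + (k : ℤ) - 1 with hd
  have hd0 : ∀ k : Fin (m+3), (k : ℕ) = 0 → d k = n - 1 := by
    intro k hk; simp only [hd]; rw [if_pos hk]
  have hdlast : ∀ k : Fin (m+3), (k : ℕ) = m + 2 → d k = n + (m : ℤ) + 2 := by
    intro k hk; simp only [hd]; rw [if_neg (by omega), if_pos hk]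
  have hdmid : ∀ k : Fin (m+3), (k : ℕ) ≠ 0 → (k : ℕ) ≠ m + 2 → d k = n + (k : ℤ) - 1 := by
    intro k hk hk'; simp only [hd]; rw [if_neg hk, if_neg hk']
  have hsyz := gdet_syzygy φ cc d x s
  set f : Fin (m+3) → ℝ := fun k => (-1 : ℝ) ^ (k : ℕ) *
      gdet φ (Function.update cc 0 (d k)) x s *
      gdet φ (fun j => d (Fin.succAbove k j)) x s with hf
  -- decompose the sum
  have hsum : ∑ k, f k = f 0 + (f 1 + (∑ i : Fin m,
      f ((Fin.castSucc i).succ.succ) + f ((Fin.last m).succ.succ))) := by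
    rw [Fin.sum_univ_succ]
    congr 1
    rw [Fin.sum_univ_succ]
    congr 1
    rw [Fin.sum_univ_castSucc]
  -- middle terms vanish
  have hmid : ∀ i : Fin m, f ((Fin.castSucc i).succ.succ) = 0 := by
    intro i
    have hiM := i.isLt
    have hval : (((Fin.castSucc i).succ.succ : Fin (m+3)) : ℕ) = (i : ℕ) + 2 := by simp
    have hdk : d ((Fin.castSucc i).succ.succ) = n + (i : ℤ) + 1 := by
      rw [hdmid _ (by omega) (by omega), hval]; push_cast; ring
    set p : Fin (m+2) := ⟨(i : ℕ) + 1, by omega⟩ with hp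
    have hne : (0 : Fin (m+2)) ≠ p := Fin.ne_of_val_ne (by simp [hp])
    have hdup : (Function.update cc 0 (d ((Fin.castSucc i).succ.succ))) 0
        = (Function.update cc 0 (d ((Fin.castSucc i).succ.succ))) p := by
      rw [Function.update_self, Function.update_of_ne (Ne.symm hne), hdk, hccv]
      simp [hp]; push_cast; ring
    have hz := gdet_dup φ hne hdup x s
    simp only [hf, hz, mul_zero, zero_mul]
  -- term k = 0
  have h0 : f 0 = gdet φ cY x s * gdet φ cX x s := by
    have e1 : Function.update cc 0 (d 0) = cY := by
      funext j
      by_cases hj : j = 0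
      · subst hj; rw [Function.update_self, hd0 _ rfl, hcY0]
      · have hjv : (j : ℕ) ≠ 0 := fun h => hj (Fin.ext h)
        rw [Function.update_of_ne hj, hccv, hcYv j hjv]
    have e2 : (fun j => d (Fin.succAbove 0 j)) = cX := by
      funext j
      have hsa : Fin.succAbove (0 : Fin (m+3)) j = j.succ := rfl
      rw [hsa]
      have hjv : ((j.succ : Fin (m+3)) : ℕ) = (j : ℕ) + 1 := Fin.val_succ j
      by_cases hj : (j : ℕ) = m + 1
      · rw [hdlast _ (by omega), show j = Fin.last (m+1) from Fin.ext hj, hcXl]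
      · have hjlt : (j : ℕ) < m + 1 := by have := j.isLt; omega
        rw [hdmid _ (by omega) (by omega), hcXv j hj, hjv]
        push_cast; ring
    simp only [hf, e1, e2]
    norm_num
  -- term k = 1
  have h1 : f 1 = - (gdet φ cc x s * gdet φ cZ x s) := by
    have hv1 : ((1 : Fin (m+3)) : ℕ) = 1 := rfl
    have e1 : Function.update cc 0 (d 1) = cc := by
      have hd1 : d 1 = cc 0 := by
        rw [hdmid _ (by rw [hv1]; omega) (by rw [hv1]; omega), hccv, hv1, h0val]
        push_cast; ring
      rw [hd1, Function.update_eq_self]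
    have e2 : (fun j => d (Fin.succAbove 1 j)) = cZ := by
      funext j
      by_cases hj0 : (j : ℕ) = 0
      · have hj0' : j = 0 := Fin.ext hj0
        subst hj0'
        have hsa : Fin.succAbove (1 : Fin (m+3)) 0 = 0 := rfl
        rw [hsa, hd0 _ rfl, hcZ0]
      · have hsa : Fin.succAbove (1 : Fin (m+3)) j = j.succ := by
          apply Fin.succAbove_of_le_castSucc
          rw [Fin.le_def]
          simp only [Fin.coe_castSucc, hv1]
          omega
        rw [hsa]
        have hjv : ((j.succ : Fin (m+3)) : ℕ) = (j : ℕ) + 1 := Fin.val_succ j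
        by_cases hj : (j : ℕ) = m + 1
        · rw [hdlast _ (by omega), show j = Fin.last (m+1) from Fin.ext hj, hcZl]
        · have hjlt : (j : ℕ) < m + 1 := by have := j.isLt; omega
          rw [hdmid _ (by omega) (by omega), hcZv j hj0 hj, hjv]
          push_cast; ring
    simp only [hf, e1, e2, hv1]
    ring
  -- term k = last
  have hlast : f ((Fin.last m).succ.succ)
      = - (gdet φ (fun j : Fin (m+2) => (n+1) + (j : ℤ)) x s *
          gdet φ (fun j : Fin (m+2) => (n-1) + (j : ℤ)) x s) := by
    have hvlast : (((Fin.last m).succ.succ : Fin (m+3)) : ℕ) = m + 2 := by simp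
    have e2 : (fun j => d (Fin.succAbove (Fin.last m).succ.succ j))
        = fun j : Fin (m+2) => (n-1) + (j : ℤ) := by
      funext j
      have hlasteq : ((Fin.last m).succ.succ : Fin (m+3)) = Fin.last (m+2) :=
        Fin.ext (by simp)
      rw [hlasteq, Fin.succAbove_last]
      have hjv : ((Fin.castSucc j : Fin (m+3)) : ℕ) = (j : ℕ) := rfl
      by_cases hj0 : (j : ℕ) = 0
      · rw [hd0 _ (by rw [hjv]; exact hj0)]
        rw [show ((j : ℤ)) = 0 from by exact_mod_cast hj0]
        ring
      · rw [hdmid _ (by rw [hjv]; exact hj0) (by rw [hjv]; have := j.isLt; omega), hjv]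
        push_cast; ring
    set ρ : Equiv.Perm (Fin (m+2)) := (finRotate (m+2))⁻¹ with hρ
    have e1 : Function.update cc 0 (d ((Fin.last m).succ.succ))
        = (fun j : Fin (m+2) => (n+1) + (j : ℤ)) ∘ ρ := by
      funext j
      rcases (finRotate (m+2)).surjective j with ⟨i, rfl⟩
      have hinv : ρ (finRotate (m+2) i) = i := by
        rw [hρ]; exact Equiv.symm_apply_apply _ _
      simp only [Function.comp_apply, hinv]
      have hrot : finRotate (m+2) i = i + 1 := finRotate_succ_apply i
      rw [hrot]
      by_cases hi : i = Fin.last (m+1)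
      · subst hi
        have hzero : (Fin.last (m+1) : Fin (m+2)) + 1 = 0 := by
          apply Fin.ext; rw [Fin.val_add_one]; simp
        rw [hzero, Function.update_self, hdlast _ hvlast, Fin.val_last]
        push_cast; ring
      · have hne : (i + 1 : Fin (m+2)) ≠ 0 := by
          apply Fin.ne_of_val_ne
          rw [Fin.val_add_one, if_neg hi]
          simp
        rw [Function.update_of_ne hne, hccv, Fin.val_add_one, if_neg hi]
        push_cast; ring
    have hsign : gdet φ (Function.update cc 0 (d ((Fin.last m).succ.succ))) x s
        = (-1 : ℝ) ^ (m + 1) * gdet φ (fun j : Fin (m+2) => (n+1) + (j : ℤ)) x s := by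
      rw [e1, gdet_perm]
      congr 1
      rw [hρ, map_inv, sign_finRotate]
      push_cast
      simp
    have hsgn2 : (-1 : ℝ) ^ (m + 2) * ((-1 : ℝ) ^ (m + 1)) = -1 := by
      rw [← pow_add]
      rw [show m + 2 + (m + 1) = 2 * (m + 1) + 1 from by ring, pow_succ, pow_mul]
      norm_num
    simp only [hf, hsign, e2, hvlast]
    calc (-1 : ℝ) ^ (m+2) * ((-1:ℝ)^(m+1) *
          gdet φ (fun j : Fin (m+2) => (n+1) + (j : ℤ)) x s) *
          gdet φ (fun j : Fin (m+2) => (n-1) + (j : ℤ)) x s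
        = ((-1 : ℝ) ^ (m+2) * ((-1:ℝ)^(m+1))) *
          (gdet φ (fun j : Fin (m+2) => (n+1) + (j : ℤ)) x s *
          gdet φ (fun j : Fin (m+2) => (n-1) + (j : ℤ)) x s) := by ring
      _ = _ := by rw [hsgn2]; ring
  rw [hsum, Finset.sum_congr rfl (fun i _ => hmid i), Finset.sum_const, smul_zero,
    h0, h1, hlast, zero_add] at hsyz
  linarith [hsyz]

theorem key_identity {M : ℕ} (φ : Fin (M+1) → ℤ → ℝ → ℝ → ℝ) (n : ℤ) (x s : ℝ)
    (cc cX : Fin (M+1) → ℤ)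
    (hcc : cc = fun j : Fin (M+1) => n + (j : ℤ))
    (hcX : cX = Function.update cc (Fin.last M) (cc (Fin.last M) + 1)) :
    (∑ k, gdet φ (Function.update cX k (cX k - 1)) x s) * gdet φ cc x s
      = gdet φ cX x s * gdet φ (Function.update cc 0 (cc 0 - 1)) x s
        - gdet φ (fun j : Fin (M+1) => (n+1) + (j : ℤ)) x s *
            gdet φ (fun j : Fin (M+1) => (n-1) + (j : ℤ)) x s
        + gdet φ cc x s * gdet φ cc x s := by
  rcases M with _ | m
  · -- N = 1
    have hl0 : (Fin.last 0 : Fin 1) = 0 := rfl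
    have hcc0 : cc 0 = n := by rw [hcc]; simp
    have hcX0 : cX 0 = n + 1 := by rw [hcX, hl0, Function.update_self, hcc0]
    have h1 : Function.update cX 0 (cX 0 - 1) = cc := by
      funext j
      have hj : j = 0 := Fin.fin_one_eq_zero j
      subst hj
      rw [Function.update_self, hcX0, hcc0]
      ring
    have h2 : Function.update cc 0 (cc 0 - 1) = fun j : Fin 1 => (n-1) + (j : ℤ) := by
      funext j
      have hj : j = 0 := Fin.fin_one_eq_zero j
      subst hj
      rw [Function.update_self, hcc0]
      simp
    have h3 : cX = fun j : Fin 1 => (n+1) + (j : ℤ) := by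
      funext j
      have hj : j = 0 := Fin.fin_one_eq_zero j
      subst hj
      rw [hcX0]; simp
    have h4 : cc = fun j : Fin 1 => (n-1+1) + (j : ℤ) := by
      funext j
      have hj : j = 0 := Fin.fin_one_eq_zero j
      subst hj
      rw [hcc0]; simp
    rw [Fin.sum_univ_one, h1, h2, h3]
    have h5 : gdet φ (fun j : Fin 1 => (n + 1) + (j : ℤ)) x s
        * gdet φ (fun j : Fin 1 => (n - 1) + (j : ℤ)) x s
      = gdet φ (fun j : Fin 1 => (n+1) + (j : ℤ)) x s *
          gdet φ (fun j : Fin 1 => (n-1) + (j : ℤ)) x s := rfl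
    ring
  · -- N = m + 2
    have hccv : ∀ j : Fin (m+2), cc j = n + (j : ℤ) := fun j => by rw [hcc]
    have hlastval : ((Fin.last (m+1) : Fin (m+2)) : ℕ) = m + 1 := rfl
    have hcXv : ∀ j : Fin (m+2), (j : ℕ) ≠ m + 1 → cX j = n + (j : ℤ) := by
      intro j hj
      rw [hcX, Function.update_of_ne (Fin.ne_of_val_ne (by rw [hlastval]; exact hj)), hccv]
    have hcXl : cX (Fin.last (m+1)) = n + (m : ℤ) + 2 := by
      rw [hcX, Function.update_self, hccv, Fin.val_last]
      push_cast; ring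
    -- collapse the sum
    have hmid : ∀ i : Fin m,
        gdet φ (Function.update cX (Fin.castSucc i).succ ((cX (Fin.castSucc i).succ) - 1)) x s
          = 0 := by
      intro i
      have hiM := i.isLt
      set k : Fin (m+2) := (Fin.castSucc i).succ with hk
      have hkv : (k : ℕ) = (i : ℕ) + 1 := by simp [hk]
      have hcXk : cX k = n + (i : ℤ) + 1 := by
        rw [hcXv k (by omega), hkv]; push_cast; ring
      set p : Fin (m+2) := ⟨(i : ℕ), by omega⟩ with hp
      have hpk : p ≠ k := Fin.ne_of_val_ne (by rw [hkv]; simp [hp])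
      refine gdet_dup φ (Ne.symm hpk) ?_ x s
      rw [Function.update_self, Function.update_of_ne hpk, hcXv p (by simp [hp]; omega), hcXk]
      simp [hp]
    have hvlt : cX (Fin.last (m+1)) - 1 = cc (Fin.last (m+1)) := by
      rw [hcXl, hccv, Fin.val_last]; push_cast; ring
    have hlastterm :
        Function.update cX (Fin.last (m+1)) ((cX (Fin.last (m+1))) - 1) = cc := by
      rw [hvlt, hcX, Function.update_idem, Function.update_eq_self]
    have hsucclast : (Fin.last m).succ = Fin.last (m+1) := rfl
    have hsum : (∑ k, gdet φ (Function.update cX k (cX k - 1)) x s)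
        = gdet φ (Function.update cX 0 (cX 0 - 1)) x s + gdet φ cc x s := by
      rw [Fin.sum_univ_succ, Fin.sum_univ_castSucc]
      rw [Finset.sum_congr rfl (fun i _ => hmid i), Finset.sum_const, smul_zero,
        hsucclast, hlastterm, zero_add]
    have hpl := plucker_identity φ n x s cc cX
      (Function.update cc 0 (cc 0 - 1)) (Function.update cX 0 (cX 0 - 1))
      hcc hcX rfl rfl
    rw [hsum]
    ring_nf
    ring_nf at hpl
    linarith [hpl]



/-- A function `τ`, written `τ n x s`, solves the bilinear 2D Toda lattice equation if
`∂²τ_n/∂s∂x · τ_n − (∂τ_n/∂s)(∂τ_n/∂x) = τ_{n+1} τ_{n−1} − τ_n²` for all `n, x, s`. -/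
def SolvesBilinearToda (τ : ℤ → ℝ → ℝ → ℝ) : Prop :=
  ∀ (n : ℤ) (x s : ℝ),
    deriv (fun s' => deriv (fun x' => τ n x' s') x) s * τ n x s -
        deriv (fun s' => τ n x s') s * deriv (fun x' => τ n x' s) x =
      τ (n + 1) x s * τ (n - 1) x s - (τ n x s) ^ 2

/-- The Casorati determinant `τ_n(x,s) = det( (φ_i(n+j−1,x,s))_{1≤i,j≤N} )`. -/
def casorati {N : ℕ} (φ : Fin N → ℤ → ℝ → ℝ → ℝ) : ℤ → ℝ → ℝ → ℝ :=
  fun n x s => Matrix.det (Matrix.of fun i j : Fin N => φ i (n + (j.1 : ℤ)) x s)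

/-- The core case `δ = 1`. -/
theorem core_delta_one {M : ℕ} {ε : ℝ} (hε : ε = 1 ∨ ε = -1)
    (φ : Fin (M+1) → ℤ → ℝ → ℝ → ℝ) (lam mu : Fin (M+1) → Fin (M+1) → ℝ → ℝ)
    (hreg : ∀ i n, ContDiff ℝ 2 (fun p : ℝ × ℝ => φ i n p.1 p.2))
    (hx : ∀ i n (x s : ℝ), deriv (fun x' => φ i n x' s) x =
        ε * φ i (n + 1) x s + ∑ j, lam i j x * φ j n x s)
    (hs : ∀ i n (x s : ℝ), deriv (fun s' => φ i n x s') s =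
        -ε * φ i (n - 1) x s + ∑ j, mu i j s * φ j n x s) :
    SolvesBilinearToda (casorati φ) := by
  have hε2 : ε * ε = 1 := by rcases hε with h | h <;> rw [h] <;> norm_num
  intro n x s
  set cc : Fin (M+1) → ℤ := fun j => n + (j : ℤ) with hcc
  set cX : Fin (M+1) → ℤ := Function.update cc (Fin.last M) (cc (Fin.last M) + 1) with hcX
  set cY : Fin (M+1) → ℤ := Function.update cc 0 (cc 0 - 1) with hcY
  have hcas : ∀ (m : ℤ) (x' s' : ℝ),
      casorati φ m x' s' = gdet φ (fun j : Fin (M+1) => m + (j : ℤ)) x' s' := by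
    intro m x' s'
    rw [gdet_def]
    rfl
  -- first x-derivative, at every point
  have hdx : ∀ (x' s' : ℝ), deriv (fun u => casorati φ n u s') x'
      = ε * gdet φ cX x' s' + (∑ k, lam k k x') * gdet φ cc x' s' := by
    intro x' s'
    have h1 : (fun u => casorati φ n u s') = fun u => gdet φ cc u s' := by
      funext u; rw [hcas]
    rw [h1, (gdet_hasDerivAt_x (δ := 1) hreg hx cc x' s').deriv,
      collapseX φ cc n (fun j => rfl) x' s', ← hcX]
  -- s-derivative of τ
  have hds : deriv (fun s' => casorati φ n x s') s
      = -ε * gdet φ cY x s + (∑ k, mu k k s) * gdet φ cc x s := by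
    have h1 : (fun s' => casorati φ n x s') = fun s' => gdet φ cc x s' := by
      funext u; rw [hcas]
    rw [h1, (gdet_hasDerivAt_s (δ := 1) hreg hs cc x s).deriv,
      collapseY φ cc n (fun j => rfl) x s, ← hcY]
  -- second mixed derivative
  set W : ℝ := ∑ k, gdet φ (Function.update cX k (cX k - 1)) x s with hW
  have hdsx : deriv (fun s' => deriv (fun x' => casorati φ n x' s') x) s
      = ε * (-ε * W + (∑ k, mu k k s) * gdet φ cX x s)
        + (∑ k, lam k k x) * (-ε * gdet φ cY x s + (∑ k, mu k k s) * gdet φ cc x s) := by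
    have h1 : (fun s' => deriv (fun x' => casorati φ n x' s') x)
        = fun s' => ε * gdet φ cX x s' + (∑ k, lam k k x) * gdet φ cc x s' := by
      funext s'; rw [hdx x s']
    rw [h1]
    have h2 : HasDerivAt (fun s' => ε * gdet φ cX x s' + (∑ k, lam k k x) * gdet φ cc x s')
        (ε * (-ε * W + (∑ k, mu k k s) * gdet φ cX x s)
          + (∑ k, lam k k x) * (-ε * gdet φ cY x s + (∑ k, mu k k s) * gdet φ cc x s)) s := by
      refine HasDerivAt.add ?_ ?_
      · exact ((gdet_hasDerivAt_s (δ := 1) hreg hs cX x s).const_mul ε).congr_deriv (by rw [hW])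
      · refine HasDerivAt.const_mul _ ?_
        have h3 := gdet_hasDerivAt_s (δ := 1) hreg hs cc x s
        rw [collapseY φ cc n (fun j => rfl) x s, ← hcY] at h3
        exact h3
    exact h2.deriv
  -- put everything together
  rw [hdsx, hds, hdx x s]
  rw [hcas (n+1) x s, hcas (n-1) x s, hcas n x s]
  have hkey := key_identity φ n x s cc cX hcc hcX
  rw [← hW, ← hcY] at hkey
  set τ : ℝ := gdet φ cc x s
  set X : ℝ := gdet φ cX x s
  set Y : ℝ := gdet φ cY x s
  set P : ℝ := gdet φ (fun j : Fin (M+1) => (n+1) + (j : ℤ)) x s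
  set Q : ℝ := gdet φ (fun j : Fin (M+1) => (n-1) + (j : ℤ)) x s
  have hgoal : (ε * (-ε * W + (∑ k, mu k k s) * X)
        + (∑ k, lam k k x) * (-ε * Y + (∑ k, mu k k s) * τ)) * τ
      - (-ε * Y + (∑ k, mu k k s) * τ) * (ε * X + (∑ k, lam k k x) * τ)
      = (ε * ε) * (X * Y - W * τ) := by ring
  rw [hgoal, hε2, one_mul, hkey]
  ring

/-- the general Casoratian formulation of the 2D Toda lattice equation. -/
theorem casoratian_solves_bilinear_toda
    (N : ℕ) (hN : 1 ≤ N) (ε : ℝ) (hε : ε = 1 ∨ ε = -1) (δ : ℤ) (hδ : δ = 1 ∨ δ = -1)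
    (φ : Fin N → ℤ → ℝ → ℝ → ℝ) (lam mu : Fin N → Fin N → ℝ → ℝ)
    (hreg : ∀ i n, ContDiff ℝ 2 (fun p : ℝ × ℝ => φ i n p.1 p.2))
    (hx : ∀ i n (x s : ℝ), deriv (fun x' => φ i n x' s) x =
        ε * φ i (n + δ) x s + ∑ j, lam i j x * φ j n x s)
    (hs : ∀ i n (x s : ℝ), deriv (fun s' => φ i n x s') s =
        -ε * φ i (n - δ) x s + ∑ j, mu i j s * φ j n x s) :
    SolvesBilinearToda (casorati φ) := by

  obtain ⟨M, rfl⟩ : ∃ M, N = M + 1 := ⟨N - 1, by omega⟩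
  rcases hδ with rfl | rfl
  · exact core_delta_one hε φ lam mu hreg hx hs
  · -- the case δ = -1 : reflect the lattice
    set ψ : Fin (M+1) → ℤ → ℝ → ℝ → ℝ := fun i m => φ i (-m) with hψ
    have hregψ : ∀ i m, ContDiff ℝ 2 (fun p : ℝ × ℝ => ψ i m p.1 p.2) := fun i m => hreg i (-m)
    have hxψ : ∀ i m (x s : ℝ), deriv (fun x' => ψ i m x' s) x =
        ε * ψ i (m + 1) x s + ∑ j, lam i j x * ψ j m x s := by
      intro i m x s
      have h := hx i (-m) x s
      rw [show (-m + (-1) : ℤ) = -(m+1) from by ring] at h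
      exact h
    have hsψ : ∀ i m (x s : ℝ), deriv (fun s' => ψ i m x s') s =
        -ε * ψ i (m - 1) x s + ∑ j, mu i j s * ψ j m x s := by
      intro i m x s
      have h := hs i (-m) x s
      rw [show (-m - (-1) : ℤ) = -(m-1) from by ring] at h
      exact h
    have hT := core_delta_one hε ψ lam mu hregψ hxψ hsψ
    -- the reversal permutation
    set r : Equiv.Perm (Fin (M+1)) := Fin.rev_involutive.toPerm _ with hr
    set sgn : ℝ := ((Equiv.Perm.sign r : ℤ) : ℝ) with hsgn
    have hsgn2 : sgn * sgn = 1 := by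
      rcases Int.units_eq_one_or (Equiv.Perm.sign r) with h | h <;>
        rw [hsgn, h] <;> norm_num
    have hrev : ∀ (m : ℤ) (x' s' : ℝ),
        casorati ψ m x' s' = sgn * casorati φ (-m - M) x' s' := by
      intro m x' s'
      have h1 : casorati ψ m x' s' = gdet φ (fun j : Fin (M+1) => -(m + (j : ℤ))) x' s' := by
        rw [gdet_def]; rfl
      have h2 : casorati φ (-m - M) x' s'
          = gdet φ (fun j : Fin (M+1) => (-m - M) + (j : ℤ)) x' s' := by
        rw [gdet_def]; rfl
      have h3 : (fun j : Fin (M+1) => -(m + (j : ℤ)))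
          = (fun j : Fin (M+1) => (-m - M) + (j : ℤ)) ∘ r := by
        funext j
        have hrj : ((r j : Fin (M+1)) : ℕ) = M - (j : ℕ) := by
          simp [hr, Function.Involutive.coe_toPerm, Fin.val_rev]
        simp only [Function.comp_apply, hrj]
        have hjM : (j : ℕ) ≤ M := by have := j.isLt; omega
        have : ((M - (j : ℕ) : ℕ) : ℤ) = (M : ℤ) - ((j : ℕ) : ℤ) := by
          push_cast [hjM]; ring
        rw [this]; ring
      rw [h1, h3, gdet_perm, h2, hsgn]
    intro n x s
    have hT' := hT (-n - M) x s
    have e0 : ∀ x' s', casorati ψ (-n - M) x' s' = sgn * casorati φ n x' s' := by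
      intro x' s'
      rw [hrev, show (-(-n - (M:ℤ)) - M) = n from by ring]
    have ep : casorati ψ (-n - M + 1) x s = sgn * casorati φ (n - 1) x s := by
      rw [hrev, show (-(-n - (M:ℤ) + 1) - M) = n - 1 from by ring]
    have em : casorati ψ (-n - M - 1) x s = sgn * casorati φ (n + 1) x s := by
      rw [hrev, show (-(-n - (M:ℤ) - 1) - M) = n + 1 from by ring]
    have e1 : ∀ s', (fun x' => casorati ψ (-n - M) x' s')
        = fun x' => sgn * casorati φ n x' s' := fun s' => funext fun x' => e0 x' s'
    have e2 : (fun s' => deriv (fun x' => casorati ψ (-n - M) x' s') x)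
        = fun s' => sgn * deriv (fun x' => casorati φ n x' s') x := by
      funext s'
      rw [e1 s', deriv_const_mul_field]
    have e3 : deriv (fun s' => deriv (fun x' => casorati ψ (-n - M) x' s') x) s
        = sgn * deriv (fun s' => deriv (fun x' => casorati φ n x' s') x) s := by
      rw [e2, deriv_const_mul_field]
    have e4 : deriv (fun s' => casorati ψ (-n - M) x s') s
        = sgn * deriv (fun s' => casorati φ n x s') s := by
      rw [show (fun s' => casorati ψ (-n - M) x s') = fun s' => sgn * casorati φ n x s'
        from funext fun s' => e0 x s', deriv_const_mul_field]
    have e5 : deriv (fun x' => casorati ψ (-n - M) x' s) x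
        = sgn * deriv (fun x' => casorati φ n x' s) x := by
      rw [e1 s, deriv_const_mul_field]
    rw [e3, e4, e5, e0 x s, ep, em] at hT'
    set A := deriv (fun s' => deriv (fun x' => casorati φ n x' s') x) s
    set B := deriv (fun s' => casorati φ n x s') s
    set C := deriv (fun x' => casorati φ n x' s) x
    set t0 := casorati φ n x s
    set tp := casorati φ (n + 1) x s
    set tm := casorati φ (n - 1) x s
    calc A * t0 - B * C = (sgn * sgn) * (A * t0 - B * C) := by rw [hsgn2]; ring
      _ = (sgn * A) * (sgn * t0) - (sgn * B) * (sgn * C) := by ring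
      _ = (sgn * tm) * (sgn * tp) - (sgn * t0) ^ 2 := hT'
      _ = (sgn * sgn) * (tp * tm - t0 ^ 2) := by ring
      _ = tp * tm - t0 ^ 2 := by rw [hsgn2]; ring
end

section
/- Let N ≥ 1 and suppose φ_1, …, φ_N : ℤ × ℝ × ℝ → ℝ are twice continuously differentiable in (x,s) and satisfy, for all n ∈ ℤ, x, s ∈ ℝ and 1 ≤ i ≤ N: ∂φ_i(n,x,s)/∂x = φ_i(n+1,x,s) and ∂φ_i(n,x,s)/∂s = −φ_i(n−1,x,s). Then the Casorati determinant τ_n(x,s) = det( (φ_i(n+j−1,x,s))_{1≤i,j≤N} ) solves the bilinear 2D Toda lattice equation: ∂²τ_n/∂s∂x · τ_n − (∂τ_n/∂s)(∂τ_n/∂x) = τ_{n+1} τ_{n−1} − τ_n² for all n, x, s. -/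
open Matrix in
theorem hasDerivAt_det_aux {n : ℕ} (A : ℝ → Matrix (Fin n) (Fin n) ℝ)
    (A' : Matrix (Fin n) (Fin n) ℝ) (t : ℝ)
    (h : ∀ i j, HasDerivAt (fun u => A u i j) (A' i j) t) :
    HasDerivAt (fun u => (A u).det)
      (∑ j, ((A t).updateCol j (fun i => A' i j)).det) t := by
  have key : HasDerivAt
      (fun u => ∑ σ : Equiv.Perm (Fin n), ((Equiv.Perm.sign σ : ℤ) : ℝ) * ∏ i, A u (σ i) i)
      (∑ σ : Equiv.Perm (Fin n), ((Equiv.Perm.sign σ : ℤ) : ℝ) *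
        ∑ i, (∏ j ∈ Finset.univ.erase i, A t (σ j) j) • A' (σ i) i) t := by
    apply HasDerivAt.fun_sum
    intro σ _
    exact (HasDerivAt.fun_finset_prod (fun i _ => h (σ i) i)).const_mul _
  have e1 : (fun u => (A u).det)
      = fun u => ∑ σ : Equiv.Perm (Fin n), ((Equiv.Perm.sign σ : ℤ) : ℝ) * ∏ i, A u (σ i) i := by
    funext u
    rw [Matrix.det_apply]
    simp [Units.smul_def, zsmul_eq_mul]
  rw [e1]
  convert key using 1
  have e2 : ∀ j : Fin n, ((A t).updateCol j fun i => A' i j).det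
      = ∑ σ : Equiv.Perm (Fin n), ((Equiv.Perm.sign σ : ℤ) : ℝ) *
          ((∏ i ∈ Finset.univ.erase j, A t (σ i) i) * A' (σ j) j) := by
    intro j
    rw [Matrix.det_apply]
    refine Finset.sum_congr rfl fun σ _ => ?_
    rw [Units.smul_def, zsmul_eq_mul]
    congr 1
    have : (∏ i, ((A t).updateCol j fun k => A' k j) (σ i) i)
        = (fun i => ((A t).updateCol j fun k => A' k j) (σ i) i) j
          * ∏ i ∈ Finset.univ.erase j, ((A t).updateCol j fun k => A' k j) (σ i) i :=
      (Finset.mul_prod_erase Finset.univ _ (Finset.mem_univ j)).symm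
    rw [this]
    rw [mul_comm]
    congr 1
    · refine Finset.prod_congr rfl fun i hi => ?_
      rw [Matrix.updateCol_apply, if_neg (Finset.ne_of_mem_erase hi)]
    · simp [Matrix.updateCol_apply]
  simp only [e2]
  rw [Finset.sum_comm]
  refine Finset.sum_congr rfl fun σ _ => ?_
  rw [Finset.mul_sum]
  refine Finset.sum_congr rfl fun j _ => ?_
  rw [smul_eq_mul]

def Dmat {N : ℕ} (φ : Fin N → ℤ → ℝ → ℝ → ℝ) (n : ℤ) (c : Fin N → ℤ) (x s : ℝ) : ℝ :=
  Matrix.det (Matrix.of fun i j : Fin N => φ i (n + c j) x s)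

theorem phi_hasDerivAt_x {N : ℕ} (φ : Fin N → ℤ → ℝ → ℝ → ℝ)
    (hreg : ∀ i n, ContDiff ℝ 2 (fun p : ℝ × ℝ => φ i n p.1 p.2))
    (hx : ∀ i n (x s : ℝ), deriv (fun x' => φ i n x' s) x = φ i (n + 1) x s)
    (i : Fin N) (m : ℤ) (x s : ℝ) :
    HasDerivAt (fun x' => φ i m x' s) (φ i (m + 1) x s) x := by
  have h1 : Differentiable ℝ (fun p : ℝ × ℝ => φ i m p.1 p.2) :=
    (hreg i m).differentiable (by norm_num)
  have hd : DifferentiableAt ℝ (fun x' => φ i m x' s) x :=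
    (h1.comp (differentiable_id.prodMk (differentiable_const s))).differentiableAt
  have h2 := hd.hasDerivAt
  rwa [hx i m x s] at h2

theorem phi_hasDerivAt_s {N : ℕ} (φ : Fin N → ℤ → ℝ → ℝ → ℝ)
    (hreg : ∀ i n, ContDiff ℝ 2 (fun p : ℝ × ℝ => φ i n p.1 p.2))
    (hs : ∀ i n (x s : ℝ), deriv (fun s' => φ i n x s') s = -φ i (n - 1) x s)
    (i : Fin N) (m : ℤ) (x s : ℝ) :
    HasDerivAt (fun s' => φ i m x s') (-φ i (m - 1) x s) s := by
  have h1 : Differentiable ℝ (fun p : ℝ × ℝ => φ i m p.1 p.2) :=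
    (hreg i m).differentiable (by norm_num)
  have hd : DifferentiableAt ℝ (fun s' => φ i m x s') s :=
    (h1.comp ((differentiable_const x).prodMk differentiable_id)).differentiableAt
  have h2 := hd.hasDerivAt
  rwa [hs i m x s] at h2


theorem updateCol_Dmat {N : ℕ} (φ : Fin N → ℤ → ℝ → ℝ → ℝ) (n : ℤ) (c : Fin N → ℤ)
    (x s : ℝ) (j : Fin N) (z : ℤ) :
    (Matrix.of fun i j : Fin N => φ i (n + c j) x s).updateCol j
      (fun i => φ i (n + z) x s)
    = Matrix.of fun i j' : Fin N => φ i (n + (Function.update c j z) j') x s := by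
  funext a b
  rw [Matrix.updateCol_apply]
  by_cases hb : b = j
  · subst hb; simp [Function.update_self]
  · simp [hb, Function.update_of_ne hb]

theorem Dmat_hasDerivAt_x {N : ℕ} (φ : Fin N → ℤ → ℝ → ℝ → ℝ)
    (hreg : ∀ i n, ContDiff ℝ 2 (fun p : ℝ × ℝ => φ i n p.1 p.2))
    (hx : ∀ i n (x s : ℝ), deriv (fun x' => φ i n x' s) x = φ i (n + 1) x s)
    (n : ℤ) (c : Fin N → ℤ) (x s : ℝ) :
    HasDerivAt (fun x' => Dmat φ n c x' s)
      (∑ j, Dmat φ n (Function.update c j (c j + 1)) x s) x := by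
  have key := hasDerivAt_det_aux (fun x' => Matrix.of fun i j : Fin N => φ i (n + c j) x' s)
    (Matrix.of fun i j : Fin N => φ i (n + c j + 1) x s) x
    (fun i j => by simpa using phi_hasDerivAt_x φ hreg hx i (n + c j) x s)
  convert key using 1
  · rfl
  refine Finset.sum_congr rfl fun j _ => ?_
  show Dmat φ n (Function.update c j (c j + 1)) x s =
    ((Matrix.of fun i j : Fin N => φ i (n + c j) x s).updateCol j
      fun i => φ i (n + c j + 1) x s).det
  rw [show (fun i => φ i (n + c j + 1) x s) = (fun i => φ i (n + (c j + 1)) x s) by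
    funext a; rw [add_assoc]]
  rw [updateCol_Dmat φ n c x s j (c j + 1)]
  rfl

theorem Dmat_hasDerivAt_s {N : ℕ} (φ : Fin N → ℤ → ℝ → ℝ → ℝ)
    (hreg : ∀ i n, ContDiff ℝ 2 (fun p : ℝ × ℝ => φ i n p.1 p.2))
    (hs : ∀ i n (x s : ℝ), deriv (fun s' => φ i n x s') s = -φ i (n - 1) x s)
    (n : ℤ) (c : Fin N → ℤ) (x s : ℝ) :
    HasDerivAt (fun s' => Dmat φ n c x s')
      (∑ j, -Dmat φ n (Function.update c j (c j - 1)) x s) s := by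
  have key := hasDerivAt_det_aux (fun s' => Matrix.of fun i j : Fin N => φ i (n + c j) x s')
    (Matrix.of fun i j : Fin N => -φ i (n + c j - 1) x s) s
    (fun i j => by simpa using phi_hasDerivAt_s φ hreg hs i (n + c j) x s)
  convert key using 1
  · rfl
  refine Finset.sum_congr rfl fun j _ => ?_
  show -Dmat φ n (Function.update c j (c j - 1)) x s =
    ((Matrix.of fun i j : Fin N => φ i (n + c j) x s).updateCol j
      fun i => -φ i (n + c j - 1) x s).det
  have e1 : (fun i => -φ i (n + c j - 1) x s)
      = (-1 : ℝ) • (fun i => φ i (n + (c j - 1)) x s) := by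
    funext a
    have : n + c j - 1 = n + (c j - 1) := by ring
    simp [this]
  rw [e1, Matrix.det_updateCol_smul, updateCol_Dmat φ n c x s j (c j - 1)]
  show _ = -1 * Dmat φ n (Function.update c j (c j - 1)) x s
  ring

theorem Dmat_eq_zero {N : ℕ} (φ : Fin N → ℤ → ℝ → ℝ → ℝ) (n : ℤ) (c : Fin N → ℤ)
    (x s : ℝ) (j k : Fin N) (hjk : j ≠ k) (hc : c j = c k) :
    Dmat φ n c x s = 0 :=
  Matrix.det_zero_of_column_eq hjk (fun i => by simp [hc])

section Pluecker
variable {m : ℕ}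

def rowsB (B : Fin m → Fin (m + 2) → ℝ) (u v : Fin (m + 2) → ℝ) : Fin (m + 2) → Fin (m + 2) → ℝ :=
  Fin.cons u (Fin.snoc B v)

/-- determinant of the matrix with rows `u, B 0, ..., B (m-1), v`. -/
def omB (B : Fin m → Fin (m + 2) → ℝ) (u v : Fin (m + 2) → ℝ) : ℝ :=
  Matrix.det (Matrix.of (rowsB B u v))

theorem rows_zero (B : Fin m → Fin (m + 2) → ℝ) (u v : Fin (m + 2) → ℝ) :
    rowsB B u v (0 : Fin (m + 2)) = u := rfl

theorem rows_last (B : Fin m → Fin (m + 2) → ℝ) (u v : Fin (m + 2) → ℝ) :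
    rowsB B u v (Fin.last (m + 1)) = v := by
  rw [rowsB, ← Fin.succ_last, Fin.cons_succ, Fin.snoc_last]

theorem rows_mid (B : Fin m → Fin (m + 2) → ℝ) (u v : Fin (m + 2) → ℝ) (k : Fin m) :
    rowsB B u v ⟨k.1 + 1, by omega⟩ = B k := by
  have h : (⟨k.1 + 1, by omega⟩ : Fin (m + 2)) = Fin.succ (Fin.castSucc k) := rfl
  rw [h, rowsB, Fin.cons_succ, Fin.snoc_castSucc]

theorem rows_mid' (B : Fin m → Fin (m + 2) → ℝ) (u u' v v' : Fin (m + 2) → ℝ)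
    (i : Fin (m + 2)) (h0 : i ≠ 0) (hl : i ≠ Fin.last (m + 1)) :
    rowsB B u v i = rowsB B u' v' i := by
  rcases i with ⟨iv, hiv⟩
  have h1 : 1 ≤ iv := by
    rcases Nat.eq_zero_or_pos iv with h | h
    · exact absurd (Fin.ext h) h0
    · exact h
  have h2 : iv ≤ m := by
    by_contra hc
    exact hl (Fin.ext (by simp; omega))
  have h3 : (⟨iv, hiv⟩ : Fin (m + 2)) = ⟨(⟨iv - 1, by omega⟩ : Fin m).1 + 1, by omega⟩ := by
    simp; omega
  rw [h3, rows_mid, rows_mid]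
end Pluecker

section Pluecker2
variable {m : ℕ}

theorem rowsB_updateRow (B : Fin m → Fin (m + 2) → ℝ) (u v w : Fin (m + 2) → ℝ) :
    Matrix.of (rowsB B u v) = (Matrix.of (rowsB B u w)).updateRow (Fin.last (m + 1)) v := by
  funext i j
  by_cases hi : i = Fin.last (m + 1)
  · subst hi; rw [Matrix.updateRow_self]; rw [Matrix.of_apply, rows_last]
  · rw [Matrix.updateRow_ne hi]
    by_cases h0 : i = 0
    · subst h0; rfl
    · exact congrFun (rows_mid' B u u v w i h0 hi) j

theorem omB_add (B : Fin m → Fin (m + 2) → ℝ) (u v w : Fin (m + 2) → ℝ) :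
    omB B u (v + w) = omB B u v + omB B u w := by
  rw [omB, omB, omB, rowsB_updateRow B u (v + w) 0, rowsB_updateRow B u v 0,
    rowsB_updateRow B u w 0, Matrix.det_updateRow_add]

theorem omB_smul (B : Fin m → Fin (m + 2) → ℝ) (u : Fin (m + 2) → ℝ) (t : ℝ)
    (v : Fin (m + 2) → ℝ) : omB B u (t • v) = t * omB B u v := by
  rw [omB, omB, rowsB_updateRow B u (t • v) 0, rowsB_updateRow B u v 0,
    Matrix.det_updateRow_smul]

/-- `omB B u` bundled as a linear map in the second argument. -/
def omBL (B : Fin m → Fin (m + 2) → ℝ) (u : Fin (m + 2) → ℝ) : (Fin (m + 2) → ℝ) →ₗ[ℝ] ℝ where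
  toFun := omB B u
  map_add' := omB_add B u
  map_smul' := fun t v => omB_smul B u t v

theorem omB_B (B : Fin m → Fin (m + 2) → ℝ) (u : Fin (m + 2) → ℝ) (k : Fin m) :
    omB B u (B k) = 0 := by
  apply Matrix.det_zero_of_row_eq (i := (⟨k.1 + 1, by omega⟩ : Fin (m + 2)))
    (j := Fin.last (m + 1))
  · exact fun h => by
      have := congrArg Fin.val h
      simp at this; omega
  · show rowsB B u (B k) (⟨k.1 + 1, by omega⟩ : Fin (m + 2)) = rowsB B u (B k) (Fin.last (m + 1))
    rw [rows_mid, rows_last]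

theorem omB_self (B : Fin m → Fin (m + 2) → ℝ) (u : Fin (m + 2) → ℝ) :
    omB B u u = 0 := by
  apply Matrix.det_zero_of_row_eq (i := (0 : Fin (m + 2))) (j := Fin.last (m + 1))
  · exact fun h => by
      have := congrArg Fin.val h
      simp at this
  · show rowsB B u u (0 : Fin (m + 2)) = rowsB B u u (Fin.last (m + 1))
    rw [rows_zero, rows_last]

theorem omB_swap (B : Fin m → Fin (m + 2) → ℝ) (u v : Fin (m + 2) → ℝ) :
    omB B v u = -omB B u v := by
  have h : rowsB B v u = rowsB B u v ∘ (Equiv.swap (0 : Fin (m + 2)) (Fin.last (m + 1))) := by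
    funext i
    by_cases h0 : i = 0
    · subst h0
      rw [Function.comp_apply, Equiv.swap_apply_left, rows_zero, rows_last]
    · by_cases hl : i = Fin.last (m + 1)
      · subst hl
        rw [Function.comp_apply, Equiv.swap_apply_right, rows_last, rows_zero]
      · rw [Function.comp_apply, Equiv.swap_apply_of_ne_of_ne h0 hl]
        exact rows_mid' B v u u v i h0 hl
  have h2 : Matrix.of (rowsB B v u)
      = (Matrix.of (rowsB B u v)).submatrix (Equiv.swap (0 : Fin (m + 2)) (Fin.last (m + 1))) id := by
    funext i j
    rw [Matrix.submatrix_apply]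
    exact congrFun (congrFun (congrArg Matrix.of h) i) j
  rw [omB, h2, Matrix.det_permute, Equiv.Perm.sign_swap, omB]
  · push_cast
    ring
  · exact fun h => by
      have := congrArg Fin.val h
      simp at this
end Pluecker2

section Pluecker3
open Matrix
variable {m : ℕ}

theorem omB_zero' (B : Fin m → Fin (m + 2) → ℝ) (u : Fin (m + 2) → ℝ) :
    omB B u 0 = 0 := (omBL B u).map_zero

theorem omBL_apply (B : Fin m → Fin (m + 2) → ℝ) (u v : Fin (m + 2) → ℝ) :
    omBL B u v = omB B u v := rfl

theorem omB_expand4 (B : Fin m → Fin (m + 2) → ℝ) (u a b c d : Fin (m + 2) → ℝ)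
    (p q r t : ℝ) (lam : Fin m → ℝ) :
    omB B u (p • a + q • b + r • c + t • d + ∑ k, lam k • B k)
      = p * omB B u a + q * omB B u b + r * omB B u c + t * omB B u d := by
  rw [show omB B u (p • a + q • b + r • c + t • d + ∑ k, lam k • B k)
      = omBL B u (p • a + q • b + r • c + t • d + ∑ k, lam k • B k) from rfl]
  rw [map_add, map_add, map_add, map_add, map_sum]
  simp only [omBL_apply]
  simp only [omB_smul, omB_B, mul_zero, Finset.sum_const_zero, add_zero]

theorem omB_zero_of_depB (B : Fin m → Fin (m + 2) → ℝ) (lam : Fin m → ℝ) (k0 : Fin m)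
    (hk0 : lam k0 ≠ 0) (hrel : ∑ k, lam k • B k = 0) (u v : Fin (m + 2) → ℝ) :
    omB B u v = 0 := by
  rw [omB, ← Matrix.exists_vecMul_eq_zero_iff]
  refine ⟨(Fin.cons 0 (Fin.snoc lam 0) : Fin (m + 2) → ℝ), ?_, ?_⟩
  · intro hw
    apply hk0
    have h1 := congrFun hw (⟨k0.1 + 1, by omega⟩ : Fin (m + 2))
    have h2 : (⟨k0.1 + 1, by omega⟩ : Fin (m + 2)) = Fin.succ (Fin.castSucc k0) := rfl
    rw [h2] at h1
    simpa using h1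
  · funext j
    simp only [Pi.zero_apply]
    have hsum : ((Fin.cons 0 (Fin.snoc lam 0) : Fin (m + 2) → ℝ) ᵥ* Matrix.of (rowsB B u v)) j
        = ∑ i : Fin (m + 2), (Fin.cons 0 (Fin.snoc lam 0) : Fin (m + 2) → ℝ) i
            * rowsB B u v i j := by
      rw [Matrix.vecMul, dotProduct]
      rfl
    rw [hsum, Fin.sum_univ_succ]
    simp only [Fin.cons_zero, Fin.cons_succ, zero_mul, zero_add]
    rw [Fin.sum_univ_castSucc]
    simp only [Fin.snoc_castSucc, Fin.snoc_last, zero_mul, add_zero]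
    have h3 : ∀ k : Fin m, rowsB B u v (Fin.succ (Fin.castSucc k)) = B k := by
      intro k
      rw [show Fin.succ (Fin.castSucc k) = (⟨k.1 + 1, by omega⟩ : Fin (m + 2)) from rfl,
        rows_mid]
    have h4 := congrFun hrel j
    simp only [Finset.sum_apply, Pi.smul_apply, smul_eq_mul, Pi.zero_apply] at h4
    rw [← h4]
    refine Finset.sum_congr rfl fun k _ => ?_
    rw [h3 k]

theorem pluecker_aux (B : Fin m → Fin (m + 2) → ℝ) (a b c d : Fin (m + 2) → ℝ)
    (p q r gd : ℝ) (lam : Fin m → ℝ) (hgd : gd ≠ 0)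
    (hsum : p • a + q • b + r • c + gd • d + ∑ k, lam k • B k = 0) :
    omB B a c * omB B b d - omB B a d * omB B b c = omB B a b * omB B c d := by
  have E : ∀ u, p * omB B u a + q * omB B u b + r * omB B u c + gd * omB B u d = 0 := by
    intro u
    have h0 : omB B u (p • a + q • b + r • c + gd • d + ∑ k, lam k • B k) = omB B u 0 := by
      rw [hsum]
    rw [omB_expand4, omB_zero'] at h0
    exact h0
  have e1 := E a
  have e2 := E b
  have e3 := E c
  rw [omB_self] at e1
  rw [omB_swap B a b, omB_self] at e2
  rw [omB_swap B a c, omB_swap B b c, omB_self] at e3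
  have goal' : gd * (omB B a c * omB B b d - omB B a d * omB B b c)
      = gd * (omB B a b * omB B c d) := by
    linear_combination omB B a c * e2 - omB B b c * e1 - omB B a b * e3
  exact mul_left_cancel₀ hgd goal'

theorem pluecker (B : Fin m → Fin (m + 2) → ℝ) (a b c d : Fin (m + 2) → ℝ) :
    omB B a c * omB B b d - omB B a d * omB B b c = omB B a b * omB B c d := by
  have hdep : ¬ LinearIndependent ℝ (Sum.elim ![a, b, c, d] B) := by
    intro hli
    have hcard := hli.fintype_card_le_finrank
    rw [Module.finrank_fintype_fun_eq_card] at hcard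
    simp [Fintype.card_sum] at hcard
    omega
  obtain ⟨g, hsum, i0, hg⟩ := Fintype.not_linearIndependent_iff.mp hdep
  rw [Fintype.sum_sum_type] at hsum
  simp only [Sum.elim_inl, Sum.elim_inr, Fin.sum_univ_four, Matrix.cons_val_zero,
    Matrix.cons_val_one, Matrix.head_cons, Matrix.cons_val_two, Matrix.tail_cons,
    Matrix.cons_val_three, Matrix.head_fin_const] at hsum
  by_cases h3 : g (Sum.inl 3) = 0
  swap
  · exact pluecker_aux B a b c d _ _ _ _ _ h3 hsum
  by_cases h2 : g (Sum.inl 2) = 0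
  swap
  · have hsum2 : g (Sum.inl 0) • a + g (Sum.inl 1) • b + g (Sum.inl 3) • d + g (Sum.inl 2) • c
        + ∑ x : Fin m, g (Sum.inr x) • B x = 0 := by
      have e : g (Sum.inl 0) • a + g (Sum.inl 1) • b + g (Sum.inl 3) • d + g (Sum.inl 2) • c
          + ∑ x : Fin m, g (Sum.inr x) • B x
          = g (Sum.inl 0) • a + g (Sum.inl 1) • b + g (Sum.inl 2) • c + g (Sum.inl 3) • d
          + ∑ x : Fin m, g (Sum.inr x) • B x := by module
      rw [e, hsum]
    have S' := pluecker_aux B a b d c _ _ _ _ _ h2 hsum2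
    have hdc := omB_swap B c d
    linear_combination -S' - omB B a b * hdc
  by_cases h1 : g (Sum.inl 1) = 0
  swap
  · have hsum2 : g (Sum.inl 0) • a + g (Sum.inl 2) • c + g (Sum.inl 3) • d + g (Sum.inl 1) • b
        + ∑ x : Fin m, g (Sum.inr x) • B x = 0 := by
      have e : g (Sum.inl 0) • a + g (Sum.inl 2) • c + g (Sum.inl 3) • d + g (Sum.inl 1) • b
          + ∑ x : Fin m, g (Sum.inr x) • B x
          = g (Sum.inl 0) • a + g (Sum.inl 1) • b + g (Sum.inl 2) • c + g (Sum.inl 3) • d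
          + ∑ x : Fin m, g (Sum.inr x) • B x := by module
      rw [e, hsum]
    have S' := pluecker_aux B a c d b _ _ _ _ _ h1 hsum2
    have hcb := omB_swap B b c
    have hdb := omB_swap B b d
    linear_combination S' - omB B a d * hcb + omB B a c * hdb
  by_cases h0 : g (Sum.inl 0) = 0
  swap
  · have hsum2 : g (Sum.inl 1) • b + g (Sum.inl 2) • c + g (Sum.inl 3) • d + g (Sum.inl 0) • a
        + ∑ x : Fin m, g (Sum.inr x) • B x = 0 := by
      have e : g (Sum.inl 1) • b + g (Sum.inl 2) • c + g (Sum.inl 3) • d + g (Sum.inl 0) • a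
          + ∑ x : Fin m, g (Sum.inr x) • B x
          = g (Sum.inl 0) • a + g (Sum.inl 1) • b + g (Sum.inl 2) • c + g (Sum.inl 3) • d
          + ∑ x : Fin m, g (Sum.inr x) • B x := by module
      rw [e, hsum]
    have S' := pluecker_aux B b c d a _ _ _ _ _ h0 hsum2
    have hca := omB_swap B a c
    have hba := omB_swap B a b
    have hda := omB_swap B a d
    linear_combination -S' + omB B b d * hca - omB B c d * hba - omB B b c * hda
  -- all four coefficients vanish
  rcases i0 with i | k
  · exfalso
    fin_cases i <;> simp_all
  · rw [h0, h1, h2, h3] at hsum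
    simp only [zero_smul, zero_add] at hsum
    have hz := omB_zero_of_depB B (fun k => g (Sum.inr k)) k hg hsum
    rw [hz a c, hz b d, hz a d, hz b c, hz a b, hz c d]
    ring
end Pluecker3

def wrow {N : ℕ} (φ : Fin N → ℤ → ℝ → ℝ → ℝ) (n : ℤ) (x s : ℝ) (k : ℤ) : Fin N → ℝ :=
  fun i => φ i (n + k) x s

def Bphi {m : ℕ} (φ : Fin (m + 2) → ℤ → ℝ → ℝ → ℝ) (n : ℤ) (x s : ℝ) :
    Fin m → Fin (m + 2) → ℝ :=
  fun k => wrow φ n x s ((k.1 : ℤ) + 1)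

open Matrix in
theorem Dmat_rows {N : ℕ} (φ : Fin N → ℤ → ℝ → ℝ → ℝ) (n : ℤ) (c : Fin N → ℤ) (x s : ℝ) :
    Dmat φ n c x s = Matrix.det (Matrix.of fun j i : Fin N => φ i (n + c j) x s) := by
  rw [Dmat, show (Matrix.of fun i j : Fin N => φ i (n + c j) x s)
    = (Matrix.of fun j i : Fin N => φ i (n + c j) x s)ᵀ from rfl, Matrix.det_transpose]

theorem Dmat_eq_omB {m : ℕ} (φ : Fin (m + 2) → ℤ → ℝ → ℝ → ℝ) (n : ℤ) (x s : ℝ)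
    (c : Fin (m + 2) → ℤ) (zu zv : ℤ) (h0 : c 0 = zu) (hl : c (Fin.last (m + 1)) = zv)
    (hmid : ∀ k : Fin m, c ⟨k.1 + 1, by omega⟩ = (k.1 : ℤ) + 1) :
    Dmat φ n c x s = omB (Bphi φ n x s) (wrow φ n x s zu) (wrow φ n x s zv) := by
  rw [Dmat_rows, omB]
  congr 1
  funext j i
  rcases j with ⟨jv, hjv⟩
  rcases Nat.eq_zero_or_pos jv with hj0 | hj0
  · subst hj0
    rw [show ((⟨0, hjv⟩ : Fin (m + 2))) = 0 from rfl, Matrix.of_apply, Matrix.of_apply,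
      rows_zero, h0]
    rfl
  rcases Nat.lt_or_ge jv (m + 1) with hjl | hjl
  · have hj : (⟨jv, hjv⟩ : Fin (m + 2)) = ⟨(⟨jv - 1, by omega⟩ : Fin m).1 + 1, by omega⟩ := by
      simp; omega
    rw [hj, Matrix.of_apply, Matrix.of_apply, rows_mid, hmid]
    rfl
  · have hj : (⟨jv, hjv⟩ : Fin (m + 2)) = Fin.last (m + 1) := by
      apply Fin.ext; simp; omega
    rw [hj, Matrix.of_apply, Matrix.of_apply, rows_last, hl]
    rfl

open Matrix Equiv in
theorem Dmat_cP {m : ℕ} (φ : Fin (m + 2) → ℤ → ℝ → ℝ → ℝ) (n : ℤ) (x s : ℝ) :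
    Dmat φ n (fun j => (j.1 : ℤ) + 1) x s
      = (-1 : ℝ) ^ m * omB (Bphi φ n x s) (wrow φ n x s ((m : ℤ) + 1))
          (wrow φ n x s ((m : ℤ) + 2)) := by
  rw [Dmat_rows]
  set σ : Equiv.Perm (Fin (m + 2)) := Fin.cycleRange (⟨m, by omega⟩ : Fin (m + 2)) with hσ
  have hfam : (Matrix.of fun j i : Fin (m + 2) => φ i (n + ((j.1 : ℤ) + 1)) x s)
      = (Matrix.of (rowsB (Bphi φ n x s) (wrow φ n x s ((m : ℤ) + 1))
          (wrow φ n x s ((m : ℤ) + 2)))).submatrix σ id := by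
    funext j i
    rw [Matrix.submatrix_apply, id_eq, Matrix.of_apply, Matrix.of_apply]
    rcases Nat.lt_or_ge j.1 m with hj | hj
    · have h1 : σ j = ⟨(⟨j.1, hj⟩ : Fin m).1 + 1, by omega⟩ := by
        apply Fin.ext
        rw [hσ, Fin.coe_cycleRange_of_lt (by rwa [Fin.lt_def])]
      rw [h1, rows_mid]
      rfl
    rcases Nat.lt_or_ge j.1 (m + 1) with hj2 | hj2
    · have hje : j = ⟨m, by omega⟩ := Fin.ext (by simp; omega)
      have h1 : σ j = 0 := by rw [hσ, hje, Fin.cycleRange_self]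
      rw [h1, rows_zero]
      rw [hje]
      show φ i (n + ((m : ℤ) + 1)) x s = φ i (n + ((m : ℤ) + 1)) x s
      rfl
    · have hje : j = Fin.last (m + 1) := Fin.ext (by simp; omega)
      have h1 : σ j = j := by
        rw [hσ, Fin.cycleRange_of_gt (by rw [hje, Fin.lt_def]; simp)]
      rw [h1, hje, rows_last]
      show φ i (n + (((Fin.last (m + 1)).1 : ℤ) + 1)) x s = φ i (n + ((m : ℤ) + 2)) x s
      have he : (((Fin.last (m + 1)).1 : ℤ) + 1) = (m : ℤ) + 2 := by
        rw [Fin.val_last]; push_cast; ring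
      rw [he]
  rw [hfam, Matrix.det_permute]
  have hsign : Equiv.Perm.sign σ = (-1) ^ m := by
    rw [hσ, Fin.sign_cycleRange]
  rw [hsign, omB]
  norm_num [Units.val_pow_eq_pow_val]

open Matrix Equiv in
theorem Dmat_cM {m : ℕ} (φ : Fin (m + 2) → ℤ → ℝ → ℝ → ℝ) (n : ℤ) (x s : ℝ) :
    Dmat φ n (fun j => (j.1 : ℤ) - 1) x s
      = (-1 : ℝ) ^ m * omB (Bphi φ n x s) (wrow φ n x s (-1)) (wrow φ n x s 0) := by
  rw [Dmat_rows]
  set ρm : Equiv.Perm (Fin (m + 1)) := (Fin.cycleRange (Fin.last m))⁻¹ with hρ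
  set σ : Equiv.Perm (Fin (m + 2)) := Equiv.Perm.decomposeFin.symm (0, ρm) with hσ
  have hfam : (Matrix.of fun j i : Fin (m + 2) => φ i (n + ((j.1 : ℤ) - 1)) x s)
      = (Matrix.of (rowsB (Bphi φ n x s) (wrow φ n x s (-1))
          (wrow φ n x s 0))).submatrix σ id := by
    funext j i
    rw [Matrix.submatrix_apply, id_eq, Matrix.of_apply, Matrix.of_apply]
    induction j using Fin.cases with
    | zero =>
        have h1 : σ 0 = 0 := by rw [hσ, Equiv.Perm.decomposeFin_symm_apply_zero]
        rw [h1, rows_zero]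
        show φ i (n + (((0 : ℕ) : ℤ) - 1)) x s = φ i (n + (-1)) x s
        norm_num
    | succ k =>
        have hσk : σ k.succ = (ρm k).succ := by
          rw [hσ, Equiv.Perm.decomposeFin_symm_apply_succ, Equiv.swap_self, Equiv.refl_apply]
        rcases Nat.eq_zero_or_pos k.1 with hk | hk
        · have hk0 : k = 0 := Fin.ext hk
          subst hk0
          have h1 : ρm 0 = Fin.last m := by
            rw [hρ, Equiv.Perm.inv_def, Equiv.symm_apply_eq, Fin.cycleRange_self]
          rw [hσk, h1, Fin.succ_last, rows_last]
          show φ i (n + ((((0 : Fin (m+1)).succ).1 : ℤ) - 1)) x s = φ i (n + 0) x s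
          norm_num
        · have hkm : k.1 < m + 1 := k.2
          have h1 : ρm k = ⟨k.1 - 1, by omega⟩ := by
            rw [hρ, Equiv.Perm.inv_def, Equiv.symm_apply_eq]
            apply Fin.ext
            rw [Fin.coe_cycleRange_of_lt (by rw [Fin.lt_def]; simp [Fin.val_last]; omega)]
            simp
            omega
          have h2 : (⟨k.1 - 1, by omega⟩ : Fin (m + 1)).succ
              = (⟨(⟨k.1 - 1, by omega⟩ : Fin m).1 + 1, by omega⟩ : Fin (m + 2)) := rfl
          rw [hσk, h1, h2, rows_mid]
          show φ i (n + (((k.succ).1 : ℤ) - 1)) x s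
              = φ i (n + (((k.1 - 1 : ℕ) : ℤ) + 1)) x s
          congr 2
          rw [Fin.val_succ]
          push_cast [Nat.cast_sub hk]
          ring
  rw [hfam, Matrix.det_permute]
  have hsign : Equiv.Perm.sign σ = (-1) ^ m := by
    rw [hσ, Equiv.Perm.decomposeFin.symm_sign, if_pos rfl, one_mul, hρ, map_inv,
      Fin.sign_cycleRange, Fin.val_last]
    simp
  rw [hsign, omB]
  norm_num [Units.val_pow_eq_pow_val]

section Collapse
variable {m : ℕ} (φ : Fin (m + 2) → ℤ → ℝ → ℝ → ℝ) (n : ℤ) (x s : ℝ)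

theorem collapse_S1 :
    ∑ j, Dmat φ n (Function.update (fun j : Fin (m + 2) => (j.1 : ℤ)) j ((j.1 : ℤ) + 1)) x s
      = Dmat φ n (Function.update (fun j : Fin (m + 2) => (j.1 : ℤ)) (Fin.last (m + 1))
          ((m : ℤ) + 2)) x s := by
  rw [Finset.sum_eq_single_of_mem (Fin.last (m + 1)) (Finset.mem_univ _)]
  · have hv : ((Fin.last (m + 1)).1 : ℤ) + 1 = (m : ℤ) + 2 := by
      rw [Fin.val_last]; push_cast; ring
    rw [hv]
  · intro j _ hj
    have hjm : j.1 < m + 1 := by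
      rcases Nat.lt_or_ge j.1 (m + 1) with h | h
      · exact h
      · exact absurd (Fin.ext (by rw [Fin.val_last]; omega)) hj
    refine Dmat_eq_zero φ n _ x s j ⟨j.1 + 1, by omega⟩ (fun h => by
      have := congrArg Fin.val h; simp at this) ?_
    rw [Function.update_self, Function.update_of_ne (fun h => by
      have := congrArg Fin.val h; simp at this)]
    push_cast
    ring

theorem collapse_S2 :
    ∑ j, -Dmat φ n (Function.update (fun j : Fin (m + 2) => (j.1 : ℤ)) j ((j.1 : ℤ) - 1)) x s
      = -Dmat φ n (Function.update (fun j : Fin (m + 2) => (j.1 : ℤ)) 0 (-1)) x s := by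
  rw [Finset.sum_eq_single_of_mem (0 : Fin (m + 2)) (Finset.mem_univ _)]
  · norm_num
  · intro j _ hj
    have hjm : 1 ≤ j.1 := by
      rcases Nat.eq_zero_or_pos j.1 with h | h
      · exact absurd (Fin.ext (by simpa using h)) hj
      · exact h
    rw [neg_eq_zero]
    refine Dmat_eq_zero φ n _ x s j ⟨j.1 - 1, by omega⟩ (fun h => by
      have := congrArg Fin.val h; simp at this; omega) ?_
    rw [Function.update_self, Function.update_of_ne (fun h => by
      have := congrArg Fin.val h; simp at this; omega)]
    push_cast
    omega

theorem collapse_S3 :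
    ∑ j, -Dmat φ n (Function.update
        (Function.update (fun j : Fin (m + 2) => (j.1 : ℤ)) (Fin.last (m + 1)) ((m : ℤ) + 2)) j
        ((Function.update (fun j : Fin (m + 2) => (j.1 : ℤ)) (Fin.last (m + 1)) ((m : ℤ) + 2)) j
          - 1)) x s
      = -Dmat φ n (Function.update
          (Function.update (fun j : Fin (m + 2) => (j.1 : ℤ)) (Fin.last (m + 1)) ((m : ℤ) + 2))
          0 (-1)) x s
        - Dmat φ n (fun j : Fin (m + 2) => (j.1 : ℤ)) x s := by
  set c0 : Fin (m + 2) → ℤ := fun j => (j.1 : ℤ) with hc0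
  set cX : Fin (m + 2) → ℤ := Function.update c0 (Fin.last (m + 1)) ((m : ℤ) + 2) with hcX
  set f : Fin (m + 2) → ℝ := fun j => -Dmat φ n (Function.update cX j (cX j - 1)) x s with hf
  have h0l : (0 : Fin (m + 2)) ≠ Fin.last (m + 1) := fun h => by
    have := congrArg Fin.val h; simp at this
  have hmem : Fin.last (m + 1) ∈ Finset.univ.erase (0 : Fin (m + 2)) :=
    Finset.mem_erase.mpr ⟨Ne.symm h0l, Finset.mem_univ _⟩
  rw [← Finset.add_sum_erase _ f (Finset.mem_univ (0 : Fin (m + 2))),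
    ← Finset.add_sum_erase _ f hmem]
  have hrest : ∑ j ∈ (Finset.univ.erase (0 : Fin (m + 2))).erase (Fin.last (m + 1)), f j = 0 := by
    refine Finset.sum_eq_zero fun j hj => ?_
    rw [Finset.mem_erase, Finset.mem_erase] at hj
    obtain ⟨hjl, hj0, -⟩ := hj
    have hj1 : 1 ≤ j.1 := by
      rcases Nat.eq_zero_or_pos j.1 with h | h
      · exact absurd (Fin.ext (by simpa using h)) hj0
      · exact h
    have hjm : j.1 < m + 1 := by
      rcases Nat.lt_or_ge j.1 (m + 1) with h | h
      · exact h
      · exact absurd (Fin.ext (by rw [Fin.val_last]; omega)) hjl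
    rw [hf, neg_eq_zero]
    refine Dmat_eq_zero φ n _ x s j ⟨j.1 - 1, by omega⟩ (fun h => by
      have := congrArg Fin.val h; simp at this; omega) ?_
    rw [Function.update_self, Function.update_of_ne (fun h => by
      have := congrArg Fin.val h; simp at this; omega)]
    rw [hcX, Function.update_of_ne hjl, Function.update_of_ne (fun h => by
      have := congrArg Fin.val h; rw [Fin.val_last] at this; simp at this; omega)]
    rw [hc0]
    push_cast
    omega
  rw [hrest, add_zero]
  have hf0 : f 0 = -Dmat φ n (Function.update cX 0 (-1)) x s := by
    show -Dmat φ n (Function.update cX 0 (cX 0 - 1)) x s = _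
    have hv : cX 0 - 1 = -1 := by
      rw [hcX, Function.update_of_ne h0l, hc0]
      norm_num
    rw [hv]
  have hflast : f (Fin.last (m + 1)) = -Dmat φ n c0 x s := by
    show -Dmat φ n (Function.update cX (Fin.last (m + 1)) (cX (Fin.last (m + 1)) - 1)) x s = _
    have h1 : cX (Fin.last (m + 1)) - 1 = (m : ℤ) + 1 := by
      rw [hcX, Function.update_self]; ring
    rw [h1, hcX, Function.update_idem]
    have h2 : ((m : ℤ) + 1) = c0 (Fin.last (m + 1)) := by
      rw [hc0]
      show (m : ℤ) + 1 = ((Fin.last (m + 1)).1 : ℤ)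
      rw [Fin.val_last]
      push_cast
      ring
    rw [h2, Function.update_eq_self]
  rw [hf0, hflast]
  ring
end Collapse

theorem Dmat_shiftP {N : ℕ} (φ : Fin N → ℤ → ℝ → ℝ → ℝ) (n : ℤ) (x s : ℝ) :
    Dmat φ (n + 1) (fun j => (j.1 : ℤ)) x s = Dmat φ n (fun j => (j.1 : ℤ) + 1) x s := by
  rw [Dmat, Dmat]
  congr 1
  funext i j
  simp only [Matrix.of_apply]
  have h : n + 1 + (j.1 : ℤ) = n + ((j.1 : ℤ) + 1) := by ring
  rw [h]

theorem Dmat_shiftM {N : ℕ} (φ : Fin N → ℤ → ℝ → ℝ → ℝ) (n : ℤ) (x s : ℝ) :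
    Dmat φ (n - 1) (fun j => (j.1 : ℤ)) x s = Dmat φ n (fun j => (j.1 : ℤ) - 1) x s := by
  rw [Dmat, Dmat]
  congr 1
  funext i j
  simp only [Matrix.of_apply]
  have h : n - 1 + (j.1 : ℤ) = n + ((j.1 : ℤ) - 1) := by ring
  rw [h]

/-- the Casoratian formulation of the 2D Toda lattice equation with the
standard linear conditions `∂φ_i/∂x = φ_i(n+1)`, `∂φ_i/∂s = −φ_i(n−1)`. -/
theorem casoratian_solves_bilinear_toda_standard
    (N : ℕ) (hN : 1 ≤ N)
    (φ : Fin N → ℤ → ℝ → ℝ → ℝ)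
    (hreg : ∀ i n, ContDiff ℝ 2 (fun p : ℝ × ℝ => φ i n p.1 p.2))
    (hx : ∀ i n (x s : ℝ), deriv (fun x' => φ i n x' s) x = φ i (n + 1) x s)
    (hs : ∀ i n (x s : ℝ), deriv (fun s' => φ i n x s') s = -φ i (n - 1) x s) :
    SolvesBilinearToda (casorati φ) := by
  rcases N with _ | N'
  · exact absurd hN (by omega)
  rcases N' with _ | m
  · -- N = 1
    intro n x s
    have hτ : ∀ (n' : ℤ) (x' s' : ℝ), casorati φ n' x' s' = φ 0 n' x' s' := by
      intro n' x' s'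
      simp [casorati, Matrix.det_fin_one]
    simp only [hτ]
    have i1 : (fun s' => deriv (fun x' => φ 0 n x' s') x) = fun s' => φ 0 (n + 1) x s' :=
      funext fun s' => hx 0 n x s'
    rw [i1, hs 0 (n + 1) x s, hs 0 n x s, hx 0 n x s]
    have h2 : n + 1 - 1 = n := by ring
    rw [h2]
    ring
  · -- N = m + 2
    intro n x s
    set c0 : Fin (m + 2) → ℤ := fun j => (j.1 : ℤ) with hc0
    set cX : Fin (m + 2) → ℤ := Function.update c0 (Fin.last (m + 1)) ((m : ℤ) + 2) with hcX
    set cS : Fin (m + 2) → ℤ := Function.update c0 0 (-1) with hcS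
    set cXS : Fin (m + 2) → ℤ := Function.update cX 0 (-1) with hcXS
    have h0l : (0 : Fin (m + 2)) ≠ Fin.last (m + 1) := fun h => by
      have := congrArg Fin.val h; simp at this
    -- first x-derivative
    have hd3 : ∀ s' : ℝ, HasDerivAt (fun x' => casorati φ n x' s') (Dmat φ n cX x s') x := by
      intro s'
      have h := Dmat_hasDerivAt_x φ hreg hx n c0 x s'
      rw [hc0] at h
      rw [collapse_S1 φ n x s'] at h
      exact h
    -- mixed derivative
    have d1 : deriv (fun s' => deriv (fun x' => casorati φ n x' s') x) s
        = -Dmat φ n cXS x s - Dmat φ n c0 x s := by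
      have e : (fun s' => deriv (fun x' => casorati φ n x' s') x)
          = fun s' => Dmat φ n cX x s' := funext fun s' => (hd3 s').deriv
      rw [e]
      have h := Dmat_hasDerivAt_s φ hreg hs n cX x s
      rw [hcX, hc0] at h
      rw [collapse_S3 φ n x s] at h
      exact h.deriv
    -- s-derivative
    have d2 : deriv (fun s' => casorati φ n x s') s = -Dmat φ n cS x s := by
      have h := Dmat_hasDerivAt_s φ hreg hs n c0 x s
      rw [hc0] at h
      rw [collapse_S2 φ n x s] at h
      exact h.deriv
    have d3 : deriv (fun x' => casorati φ n x' s) x = Dmat φ n cX x s := (hd3 s).deriv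
    have hT : casorati φ n x s = Dmat φ n c0 x s := rfl
    have hP : casorati φ (n + 1) x s = Dmat φ n (fun j => (j.1 : ℤ) + 1) x s :=
      Dmat_shiftP φ n x s
    have hM : casorati φ (n - 1) x s = Dmat φ n (fun j => (j.1 : ℤ) - 1) x s :=
      Dmat_shiftM φ n x s
    rw [d1, d2, d3, hT, hP, hM]
    -- identify with omB
    set Bw := Bphi φ n x s with hBw
    set a := wrow φ n x s (-1) with ha
    set b := wrow φ n x s 0 with hb
    set cR := wrow φ n x s ((m : ℤ) + 1) with hcR
    set d := wrow φ n x s ((m : ℤ) + 2) with hd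
    have hmidlast : ∀ k : Fin m, (⟨k.1 + 1, by omega⟩ : Fin (m + 2)) ≠ Fin.last (m + 1) :=
      fun k h => by have := congrArg Fin.val h; simp [Fin.val_last] at this; omega
    have hmid0 : ∀ k : Fin m, (⟨k.1 + 1, by omega⟩ : Fin (m + 2)) ≠ 0 :=
      fun k h => by have := congrArg Fin.val h; simp at this
    have hc0mid : ∀ k : Fin m, c0 (⟨k.1 + 1, by omega⟩ : Fin (m + 2)) = (k.1 : ℤ) + 1 := by
      intro k; rw [hc0]; push_cast; rfl
    have hc0last : c0 (Fin.last (m + 1)) = (m : ℤ) + 1 := by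
      rw [hc0]
      show ((Fin.last (m + 1)).1 : ℤ) = (m : ℤ) + 1
      rw [Fin.val_last]; push_cast; ring
    have eT : Dmat φ n c0 x s = omB Bw b cR :=
      Dmat_eq_omB φ n x s c0 0 ((m : ℤ) + 1) rfl hc0last hc0mid
    have eR : Dmat φ n cX x s = omB Bw b d := by
      refine Dmat_eq_omB φ n x s cX 0 ((m : ℤ) + 2) ?_ ?_ ?_
      · rw [hcX, Function.update_of_ne h0l]; rfl
      · rw [hcX, Function.update_self]
      · intro k; rw [hcX, Function.update_of_ne (hmidlast k)]; exact hc0mid k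
    have eQ : Dmat φ n cS x s = omB Bw a cR := by
      refine Dmat_eq_omB φ n x s cS (-1) ((m : ℤ) + 1) ?_ ?_ ?_
      · rw [hcS, Function.update_self]
      · rw [hcS, Function.update_of_ne (Ne.symm h0l)]; exact hc0last
      · intro k; rw [hcS, Function.update_of_ne (hmid0 k)]; exact hc0mid k
    have eP : Dmat φ n cXS x s = omB Bw a d := by
      refine Dmat_eq_omB φ n x s cXS (-1) ((m : ℤ) + 2) ?_ ?_ ?_
      · rw [hcXS, Function.update_self]
      · rw [hcXS, Function.update_of_ne (Ne.symm h0l), hcX, Function.update_self]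
      · intro k
        rw [hcXS, Function.update_of_ne (hmid0 k), hcX, Function.update_of_ne (hmidlast k)]
        exact hc0mid k
    have ePP : Dmat φ n (fun j => (j.1 : ℤ) + 1) x s = (-1 : ℝ) ^ m * omB Bw cR d :=
      Dmat_cP φ n x s
    have eMM : Dmat φ n (fun j => (j.1 : ℤ) - 1) x s = (-1 : ℝ) ^ m * omB Bw a b :=
      Dmat_cM φ n x s
    rw [eT, eR, eQ, eP, ePP, eMM]
    have hpl := pluecker Bw a b cR d
    have hsq : (-1 : ℝ) ^ m * (-1 : ℝ) ^ m = 1 := by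
      rw [← mul_pow]; norm_num
    linear_combination hpl - (omB Bw cR d * omB Bw a b) * hsq
end

section
/- Let ε ∈ {1, −1} and N ≥ 1. Suppose φ_1, …, φ_N : ℤ × ℝ × ℝ → ℝ are differentiable in x, λ_{ij} : ℝ → ℝ (1 ≤ i,j ≤ N) are functions, and for all n ∈ ℤ, x, s ∈ ℝ and 1 ≤ i ≤ N: ∂φ_i(n,x,s)/∂x = ε φ_i(n+1,x,s) + Σ_{j=1}^N λ_{ij}(x) φ_j(n,x,s). Then for the generalized Casorati determinants |i_1,…,i_N| built from φ_1,…,φ_N: ∂|0,1,…,N−1|/∂x = ε |0,1,…,N−2,N| + (Σ_{i=1}^N λ_{ii}(x)) |0,1,…,N−1|, for all n, x, s. -/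
/-- The generalized Casorati determinant `|i_1,…,i_N|`: the determinant of the `N×N` matrix
whose `(i,j)` entry is `φ_i(n + i_j, x, s)`, where the column shifts are given by `idx`. -/
def gcas {N : ℕ} (φ : Fin N → ℤ → ℝ → ℝ → ℝ) (idx : Fin N → ℤ) (n : ℤ) (x s : ℝ) : ℝ :=
  Matrix.det (Matrix.of fun i j : Fin N => φ i (n + idx j) x s)

open Matrix Finset

lemma hasDerivAt_det_s2 {N : ℕ} (A : ℝ → Matrix (Fin N) (Fin N) ℝ)
    (A' : Matrix (Fin N) (Fin N) ℝ) (x : ℝ)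
    (h : ∀ i j, HasDerivAt (fun x => A x i j) (A' i j) x) :
    HasDerivAt (fun x => (A x).det)
      (∑ i, ((A x).updateRow i (A' i)).det) x := by
  have key : HasDerivAt (fun x => ∑ σ : Equiv.Perm (Fin N),
      (Equiv.Perm.sign σ : ℝ) * ∏ i, A x (σ i) i)
      (∑ σ : Equiv.Perm (Fin N), (Equiv.Perm.sign σ : ℝ) *
        ∑ i, (∏ j ∈ Finset.univ.erase i, A x (σ j) j) • A' (σ i) i) x := by
    apply HasDerivAt.fun_sum
    intro σ _
    exact (HasDerivAt.fun_finsetProd (fun i _ => h (σ i) i)).const_mul _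
  have e1 : (fun x => ∑ σ : Equiv.Perm (Fin N),
      (Equiv.Perm.sign σ : ℝ) * ∏ i, A x (σ i) i) = fun x => (A x).det := by
    funext y; rw [Matrix.det_apply']
  rw [e1] at key
  convert key using 1
  simp_rw [Matrix.det_apply']
  rw [Finset.sum_comm]
  refine Finset.sum_congr rfl fun σ _ => ?_
  rw [← mul_sum]
  congr 1
  rw [← Equiv.sum_comp σ (fun k => ∏ j, ((A x).updateRow k (A' k)) (σ j) j)]
  refine Finset.sum_congr rfl fun i _ => ?_
  rw [smul_eq_mul,
    ← Finset.mul_prod_erase Finset.univ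
      (fun j => ((A x).updateRow (σ i) (A' (σ i))) (σ j) j) (Finset.mem_univ i),
    Matrix.updateRow_self, mul_comm]
  congr 1
  exact Finset.prod_congr rfl fun j hj => by
    rw [Matrix.updateRow_ne (σ.injective.ne (Finset.ne_of_mem_erase hj))]

lemma sum_det_updateRow_mul {N : ℕ} (M C : Matrix (Fin N) (Fin N) ℝ) :
    ∑ i, (M.updateRow i ((M * C) i)).det = Matrix.trace C * M.det := by
  have e1 : ∀ i, (M.updateRow i ((M * C) i)).det = Matrix.cramer Mᵀ ((M * C) i) i := by
    intro i
    rw [Matrix.cramer_apply, Matrix.updateCol_transpose, Matrix.det_transpose]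
  simp_rw [e1, Matrix.cramer_eq_adjugate_mulVec, ← Matrix.adjugate_transpose]
  have e2 : ∑ i, ((Matrix.adjugate M)ᵀ *ᵥ (M * C) i) i
      = Matrix.trace (Matrix.adjugate M * (M * C)) := by
    rw [Matrix.trace]
    simp only [Matrix.mulVec, dotProduct, Matrix.diag, Matrix.mul_apply,
      Matrix.transpose_apply]
    rw [Finset.sum_comm]
  rw [e2, ← Matrix.mul_assoc, Matrix.adjugate_mul, Matrix.smul_mul, Matrix.one_mul,
    Matrix.trace_smul, smul_eq_mul, mul_comm]

/-- `∂|0,…,N−1|/∂x = ε |0,…,N−2,N| + (Σ_i λ_{ii}(x)) |0,…,N−1|`. -/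
theorem deriv_x_casoratian
    (N : ℕ) (hN : 1 ≤ N) (ε : ℝ) (hε : ε = 1 ∨ ε = -1)
    (φ : Fin N → ℤ → ℝ → ℝ → ℝ) (lam : Fin N → Fin N → ℝ → ℝ)
    (hdiff : ∀ i n (s : ℝ), Differentiable ℝ (fun x => φ i n x s))
    (hx : ∀ i n (x s : ℝ), deriv (fun x' => φ i n x' s) x =
        ε * φ i (n + 1) x s + ∑ j, lam i j x * φ j n x s) :
    ∀ (n : ℤ) (x s : ℝ),
      deriv (fun x' => gcas φ (fun j => (j.1 : ℤ)) n x' s) x =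
        ε * gcas φ (fun j => if j.1 = N - 1 then (N : ℤ) else (j.1 : ℤ)) n x s +
          (∑ i, lam i i x) * gcas φ (fun j => (j.1 : ℤ)) n x s := by
  intro n x s
  set A : ℝ → Matrix (Fin N) (Fin N) ℝ :=
    fun t => Matrix.of fun j i : Fin N => φ i (n + j.1) t s with hA
  set C : Matrix (Fin N) (Fin N) ℝ := Matrix.of fun k i => lam i k x with hC
  set D : Matrix (Fin N) (Fin N) ℝ :=
    Matrix.of fun j i : Fin N =>
      ε * φ i (n + j.1 + 1) x s + ∑ k, lam i k x * φ k (n + j.1) x s with hD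
  have hder : ∀ j i, HasDerivAt (fun t => A t j i) (D j i) x := by
    intro j i
    have h1 := ((hdiff i (n + j.1) s) x).hasDerivAt
    rw [hx i (n + j.1) x s] at h1
    exact h1
  have main := hasDerivAt_det_s2 A D x hder
  have efun : (fun t => (A t).det)
      = fun t => gcas φ (fun j => (j.1 : ℤ)) n t s := by
    funext t
    rw [gcas, ← Matrix.det_transpose]
    rfl
  rw [efun] at main
  rw [main.deriv]
  -- split each row derivative
  have split : ∀ j : Fin N, ((A x).updateRow j (D j)).det
      = ε * ((A x).updateRow j (fun i => φ i (n + j.1 + 1) x s)).det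
        + ((A x).updateRow j ((A x * C) j)).det := by
    intro j
    have e : D j = (ε • fun i => φ i (n + j.1 + 1) x s) + (A x * C) j := by
      funext i
      simp only [hD, hC, hA, Matrix.of_apply, Pi.add_apply, Pi.smul_apply, smul_eq_mul,
        Matrix.mul_apply]
      congr 1
      exact Finset.sum_congr rfl fun k _ => mul_comm _ _
    rw [e, Matrix.det_updateRow_add, Matrix.det_updateRow_smul]
  simp_rw [split]
  rw [Finset.sum_add_distrib, ← Finset.mul_sum, sum_det_updateRow_mul]
  have htr : Matrix.trace C = ∑ i, lam i i x := by
    simp [hC, Matrix.trace, Matrix.diag]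
  have hNlt : N - 1 < N := by omega
  have hshift : ∑ j : Fin N,
      ((A x).updateRow j (fun i => φ i (n + j.1 + 1) x s)).det
      = gcas φ (fun j => if j.1 = N - 1 then (N : ℤ) else (j.1 : ℤ)) n x s := by
    rw [Finset.sum_eq_single (⟨N - 1, hNlt⟩ : Fin N)]
    · rw [gcas, ← Matrix.det_transpose]
      congr 1
      ext j i
      simp only [Matrix.transpose_apply, Matrix.of_apply]
      by_cases hi : i = (⟨N - 1, hNlt⟩ : Fin N)
      · subst hi
        rw [Matrix.updateRow_self]
        simp only [if_pos rfl]
        congr 1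
        push_cast
        omega
      · rw [Matrix.updateRow_ne hi]
        have hni : ¬ (i.1 = N - 1) := fun h => hi (Fin.ext h)
        simp only [hA, Matrix.of_apply, if_neg hni]
    · intro j _ hj
      have hjlt : j.1 + 1 < N := by
        have := j.2
        have : j.1 ≠ N - 1 := fun h => hj (Fin.ext h)
        omega
      refine Matrix.det_zero_of_row_eq (i := j) (j := ⟨j.1 + 1, hjlt⟩)
        (fun h => by simp [Fin.ext_iff] at h) ?_
      rw [Matrix.updateRow_self, Matrix.updateRow_ne (by simp [Fin.ext_iff])]
      funext i
      simp only [hA, Matrix.of_apply]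
      congr 1
      push_cast
      ring
    · intro h
      exact absurd (Finset.mem_univ _) h
  rw [hshift, htr, congrFun efun x]
end

section
/- Let ε ∈ {1, −1} and N ≥ 1. Suppose φ_1, …, φ_N : ℤ × ℝ × ℝ → ℝ are differentiable in s, μ_{ij} : ℝ → ℝ (1 ≤ i,j ≤ N) are functions, and for all n ∈ ℤ, x, s ∈ ℝ and 1 ≤ i ≤ N: ∂φ_i(n,x,s)/∂s = −ε φ_i(n−1,x,s) + Σ_{j=1}^N μ_{ij}(s) φ_j(n,x,s). Then for the generalized Casorati determinants |i_1,…,i_N| built from φ_1,…,φ_N: ∂|0,1,…,N−1|/∂s = −ε |−1,1,2,…,N−1| + (Σ_{i=1}^N μ_{ii}(s)) |0,1,…,N−1|, for all n, x, s. -/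
open Matrix Finset

/-- Row version of the derivative of a determinant. -/
lemma hasDerivAt_det_row {N : ℕ} (M : ℝ → Matrix (Fin N) (Fin N) ℝ)
    (M' : Matrix (Fin N) (Fin N) ℝ) (s : ℝ)
    (h : ∀ i j, HasDerivAt (fun t => M t i j) (M' i j) s) :
    HasDerivAt (fun t => (M t).det)
      (∑ i, ((M s).updateRow i (M' i)).det) s := by
  have key : ∀ σ : Equiv.Perm (Fin N),
      HasDerivAt (fun t => ∏ j, M t (σ j) j)
        (∑ c, (∏ j ∈ Finset.univ.erase c, M s (σ j) j) • M' (σ c) c) s := by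
    intro σ
    exact HasDerivAt.fun_finsetProd (fun c _ => h (σ c) c)
  have main : HasDerivAt (fun t => ∑ σ : Equiv.Perm (Fin N),
      (Equiv.Perm.sign σ : ℤ) * ∏ j, M t (σ j) j)
      (∑ σ : Equiv.Perm (Fin N), (Equiv.Perm.sign σ : ℤ) *
        ∑ c, (∏ j ∈ Finset.univ.erase c, M s (σ j) j) • M' (σ c) c) s := by
    apply HasDerivAt.fun_sum
    intro σ _
    exact (key σ).const_mul _
  have e1 : (fun t => (M t).det) = (fun t => ∑ σ : Equiv.Perm (Fin N),
      (Equiv.Perm.sign σ : ℤ) * ∏ j, M t (σ j) j) := by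
    funext t
    rw [Matrix.det_apply']
  rw [e1]
  convert main using 1
  -- identify the sums
  have : ∀ i : Fin N, ((M s).updateRow i (M' i)).det =
      ∑ σ : Equiv.Perm (Fin N), (Equiv.Perm.sign σ : ℤ) *
        ∏ j, ((M s).updateRow i (M' i)) (σ j) j := by
    intro i; rw [Matrix.det_apply']
  simp_rw [this]
  rw [Finset.sum_comm]
  refine Finset.sum_congr rfl (fun σ _ => ?_)
  rw [← Finset.mul_sum]
  congr 1
  rw [← Equiv.sum_comp σ (fun i => ∏ j, ((M s).updateRow i (M' i)) (σ j) j)]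
  refine Finset.sum_congr rfl (fun c _ => ?_)
  rw [smul_eq_mul, mul_comm,
    ← Finset.mul_prod_erase Finset.univ
      (fun j => ((M s).updateRow (σ c) (M' (σ c))) (σ j) j) (Finset.mem_univ c)]
  have h1 : ((M s).updateRow (σ c) (M' (σ c))) (σ c) c = M' (σ c) c :=
    congrFun (Matrix.updateRow_self) c
  have h2 : ∏ j ∈ Finset.univ.erase c, ((M s).updateRow (σ c) (M' (σ c))) (σ j) j
      = ∏ j ∈ Finset.univ.erase c, M s (σ j) j := by
    refine Finset.prod_congr rfl (fun j hj => ?_)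
    have hjc : σ j ≠ σ c := by
      simp only [Finset.mem_erase] at hj
      exact fun hc => hj.1 (σ.injective hc)
    rw [Matrix.updateRow_ne hjc]
  rw [h1, h2]

/-- Column version of the derivative of a determinant. -/
lemma hasDerivAt_det_col {N : ℕ} (M : ℝ → Matrix (Fin N) (Fin N) ℝ)
    (M' : Matrix (Fin N) (Fin N) ℝ) (s : ℝ)
    (h : ∀ i j, HasDerivAt (fun t => M t i j) (M' i j) s) :
    HasDerivAt (fun t => (M t).det)
      (∑ j, ((M s).updateCol j (fun i => M' i j)).det) s := by
  have := hasDerivAt_det_row (fun t => (M t)ᵀ) M'ᵀ s (fun i j => h j i)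
  simp only [Matrix.det_transpose] at this
  convert this using 2 with j
  rw [Matrix.updateRow_transpose, Matrix.det_transpose]
  rfl

/-- The sum of row-replacement determinants equals the sum of column-replacement
determinants. -/
lemma sum_det_updateRow_eq_sum_det_updateCol {N : ℕ}
    (P Q : Matrix (Fin N) (Fin N) ℝ) :
    ∑ i, (P.updateRow i (Q i)).det = ∑ j, (P.updateCol j (fun i => Q i j)).det := by
  have h : ∀ i j : Fin N, HasDerivAt
      (fun t : ℝ => (Matrix.of fun i j => P i j + t * Q i j : Matrix (Fin N) (Fin N) ℝ) i j)
      (Q i j) 0 := by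
    intro i j
    simpa using ((hasDerivAt_id (0 : ℝ)).mul_const (Q i j)).const_add (P i j)
  have hr := hasDerivAt_det_row _ Q 0 h
  have hc := hasDerivAt_det_col _ Q 0 h
  have hP : (Matrix.of fun i j => P i j + (0 : ℝ) * Q i j : Matrix (Fin N) (Fin N) ℝ) = P := by
    ext i j; simp
  rw [hP] at hr hc
  exact hr.unique hc

/-- `∂|0,…,N−1|/∂s = −ε |−1,1,…,N−1| + (Σ_i μ_{ii}(s)) |0,…,N−1|`. -/
theorem deriv_s_casoratian
    (N : ℕ) (hN : 1 ≤ N) (ε : ℝ) (hε : ε = 1 ∨ ε = -1)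
    (φ : Fin N → ℤ → ℝ → ℝ → ℝ) (mu : Fin N → Fin N → ℝ → ℝ)
    (hdiff : ∀ i n (x : ℝ), Differentiable ℝ (fun s => φ i n x s))
    (hs : ∀ i n (x s : ℝ), deriv (fun s' => φ i n x s') s =
        -ε * φ i (n - 1) x s + ∑ j, mu i j s * φ j n x s) :
    ∀ (n : ℤ) (x s : ℝ),
      deriv (fun s' => gcas φ (fun j => (j.1 : ℤ)) n x s') s =
        -ε * gcas φ (fun j => if j.1 = 0 then (-1 : ℤ) else (j.1 : ℤ)) n x s +
          (∑ i, mu i i s) * gcas φ (fun j => (j.1 : ℤ)) n x s := by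
  intro n x s
  haveI : NeZero N := ⟨by omega⟩
  set A : Matrix (Fin N) (Fin N) ℝ :=
    Matrix.of (fun i j : Fin N => φ i (n + (j.1 : ℤ)) x s) with hA
  -- entry derivatives
  set D : Matrix (Fin N) (Fin N) ℝ :=
    Matrix.of (fun i j : Fin N =>
      -ε * φ i (n + (j.1 : ℤ) - 1) x s + ∑ k, mu i k s * φ k (n + (j.1 : ℤ)) x s) with hD
  have hder : ∀ i j : Fin N, HasDerivAt
      (fun t => (Matrix.of (fun i j : Fin N => φ i (n + (j.1 : ℤ)) x t)
        : Matrix (Fin N) (Fin N) ℝ) i j) (D i j) s := by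
    intro i j
    have h1 : HasDerivAt (fun t => φ i (n + (j.1 : ℤ)) x t)
        (deriv (fun t => φ i (n + (j.1 : ℤ)) x t) s) s :=
      ((hdiff i (n + (j.1 : ℤ)) x) s).hasDerivAt
    rwa [hs] at h1
  have hdet := hasDerivAt_det_row
      (fun t => Matrix.of (fun i j : Fin N => φ i (n + (j.1 : ℤ)) x t)) D s hder
  have hfun : (fun s' => gcas φ (fun j => (j.1 : ℤ)) n x s')
      = fun t => ((Matrix.of (fun i j : Fin N => φ i (n + (j.1 : ℤ)) x t)
        : Matrix (Fin N) (Fin N) ℝ)).det := rfl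
  rw [hfun, hdet.deriv]
  -- split D into shift part and mu part
  have hsplit : ∀ i : Fin N, (A.updateRow i (D i)).det =
      (A.updateRow i (fun j => -ε * φ i (n + (j.1 : ℤ) - 1) x s)).det +
      (A.updateRow i (fun j => ∑ k, mu i k s * φ k (n + (j.1 : ℤ)) x s)).det := by
    intro i
    rw [← Matrix.det_updateRow_add]
    rfl
  show ∑ i, (A.updateRow i (D i)).det = _
  simp_rw [hsplit, Finset.sum_add_distrib]
  -- mu part
  have hmu : ∀ i : Fin N,
      (A.updateRow i (fun j => ∑ k, mu i k s * φ k (n + (j.1 : ℤ)) x s)).det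
        = mu i i s * A.det := by
    intro i
    have : (fun j => ∑ k, mu i k s * φ k (n + (j.1 : ℤ)) x s)
        = ∑ k, (mu i k s) • A k := by
      funext j
      simp [Finset.sum_apply, hA]
    rw [this, Matrix.det_updateRow_sum, smul_eq_mul]
  -- shift part
  have hsh : ∀ i : Fin N,
      (A.updateRow i (fun j => -ε * φ i (n + (j.1 : ℤ) - 1) x s)).det
        = -ε * (A.updateRow i (fun j => φ i (n + (j.1 : ℤ) - 1) x s)).det := by
    intro i
    have : (fun j : Fin N => -ε * φ i (n + (j.1 : ℤ) - 1) x s)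
        = (-ε) • (fun j : Fin N => φ i (n + (j.1 : ℤ) - 1) x s) := by
      funext j; simp
    rw [this, Matrix.det_updateRow_smul]
  simp_rw [hmu, hsh]
  rw [← Finset.sum_mul, ← Finset.mul_sum]
  -- convert shift row-sum to column-sum
  have hcol := sum_det_updateRow_eq_sum_det_updateCol A
      (Matrix.of fun i j : Fin N => φ i (n + (j.1 : ℤ) - 1) x s)
  have hcol' : ∑ i, (A.updateRow i (fun j => φ i (n + (j.1 : ℤ) - 1) x s)).det
      = ∑ j, (A.updateCol j (fun i => φ i (n + (j.1 : ℤ) - 1) x s)).det := hcol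
  rw [hcol']
  -- the column sum: only j = 0 survives
  have hzero : ∀ j : Fin N, j ≠ 0 →
      (A.updateCol j (fun i => φ i (n + (j.1 : ℤ) - 1) x s)).det = 0 := by
    intro j hj
    have hj1 : 1 ≤ j.1 := by
      rcases Nat.eq_zero_or_pos j.1 with h | h
      · exact absurd (Fin.ext h) hj
      · exact h
    set j' : Fin N := ⟨j.1 - 1, by omega⟩ with hj'
    have hne : j' ≠ j := by
      intro hcontra
      have : j.1 - 1 = j.1 := congrArg Fin.val hcontra
      omega
    apply Matrix.det_zero_of_column_eq hne
    intro i
    rw [Matrix.updateCol_ne hne, Matrix.updateCol_self]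
    show φ i (n + ((j.1 - 1 : ℕ) : ℤ)) x s = φ i (n + (j.1 : ℤ) - 1) x s
    congr 1
    push_cast [hj1]
    ring
  have hmain : ∑ j, (A.updateCol j (fun i => φ i (n + (j.1 : ℤ) - 1) x s)).det
      = (A.updateCol 0 (fun i => φ i (n + ((0 : Fin N).1 : ℤ) - 1) x s)).det := by
    apply Finset.sum_eq_single 0
    · intro j _ hj; exact hzero j hj
    · intro h; exact absurd (Finset.mem_univ 0) h
  rw [hmain]
  have h0 : (A.updateCol 0 (fun i => φ i (n + ((0 : Fin N).1 : ℤ) - 1) x s)).det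
      = gcas φ (fun j => if j.1 = 0 then (-1 : ℤ) else (j.1 : ℤ)) n x s := by
    unfold gcas
    congr 1
    ext i j
    by_cases hj : j = 0
    · subst hj
      rw [Matrix.updateCol_self]
      have : ((0 : Fin N).1 : ℤ) = 0 := by
        simp [Fin.val_zero]
      rw [this]
      simp
      ring_nf
    · rw [Matrix.updateCol_ne hj]
      have hj0 : j.1 ≠ 0 := fun h => hj (Fin.ext h)
      simp [hA, hj0, hj]
  rw [h0]
  show _ = -ε * _ + (∑ i, mu i i s) * A.det
  rfl
end

section
/- Let ε ∈ {1, −1}, δ ∈ {1, −1}, N ≥ 1. Suppose Φ : ℤ × ℝ × ℝ → ℝ^N is twice continuously differentiable in (x,s), A : ℝ → Matrix(N,N,ℝ) and B : ℝ → Matrix(N,N,ℝ) are functions, and for all n ∈ ℤ, x, s ∈ ℝ: ∂Φ(n,x,s)/∂x = ε Φ(n+δ,x,s) + A(x) Φ(n,x,s) and ∂Φ(n,x,s)/∂s = −ε Φ(n−δ,x,s) + B(s) Φ(n,x,s). Then for all n ∈ ℤ and x, s ∈ ℝ: (A(x) B(s) − B(s) A(x)) Φ(n,x,s) = 0. -/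
section aux

variable {E : Type*} [NormedAddCommGroup E] [NormedSpace ℝ E]

lemma aux_derivx {f : ℝ × ℝ → E} {x s : ℝ} (hf : DifferentiableAt ℝ f (x, s)) :
    deriv (fun x' => f (x', s)) x = fderiv ℝ f (x, s) (1, 0) :=
  (hf.hasFDerivAt.comp_hasDerivAt x ((hasDerivAt_id x).prodMk (hasDerivAt_const x s))).deriv

lemma aux_derivs {f : ℝ × ℝ → E} {x s : ℝ} (hf : DifferentiableAt ℝ f (x, s)) :
    deriv (fun s' => f (x, s')) s = fderiv ℝ f (x, s) (0, 1) :=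
  (hf.hasFDerivAt.comp_hasDerivAt s ((hasDerivAt_const s x).prodMk (hasDerivAt_id s))).deriv

lemma aux_mixed_s {f : ℝ × ℝ → E} (hf : ContDiff ℝ 2 f) (x s : ℝ) (v : ℝ × ℝ) :
    deriv (fun s' => fderiv ℝ f (x, s') v) s = fderiv ℝ (fderiv ℝ f) (x, s) (0, 1) v := by
  have hf' : Differentiable ℝ (fderiv ℝ f) :=
    (hf.fderiv_right (m := 1) (by norm_num)).differentiable one_ne_zero
  have h1 : HasDerivAt (fun s' => fderiv ℝ f (x, s'))
      (fderiv ℝ (fderiv ℝ f) (x, s) (0, 1)) s :=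
    (hf' (x, s)).hasFDerivAt.comp_hasDerivAt s ((hasDerivAt_const s x).prodMk (hasDerivAt_id s))
  have h2 := (ContinuousLinearMap.apply ℝ E v).hasFDerivAt.comp_hasDerivAt s h1
  simpa [Function.comp_def] using h2.deriv

lemma aux_mixed_x {f : ℝ × ℝ → E} (hf : ContDiff ℝ 2 f) (x s : ℝ) (v : ℝ × ℝ) :
    deriv (fun x' => fderiv ℝ f (x', s) v) x = fderiv ℝ (fderiv ℝ f) (x, s) (1, 0) v := by
  have hf' : Differentiable ℝ (fderiv ℝ f) :=
    (hf.fderiv_right (m := 1) (by norm_num)).differentiable one_ne_zero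
  have h1 : HasDerivAt (fun x' => fderiv ℝ f (x', s))
      (fderiv ℝ (fderiv ℝ f) (x, s) (1, 0)) x :=
    (hf' (x, s)).hasFDerivAt.comp_hasDerivAt x ((hasDerivAt_id x).prodMk (hasDerivAt_const x s))
  have h2 := (ContinuousLinearMap.apply ℝ E v).hasFDerivAt.comp_hasDerivAt x h1
  simpa [Function.comp_def] using h2.deriv

end aux

/-- compatibility of the coupled linear differential-difference system implies
`(A(x) B(s) − B(s) A(x)) Φ(n,x,s) = 0`. -/
theorem commutator_mulVec_eq_zero
    (N : ℕ) (hN : 1 ≤ N) (ε : ℝ) (hε : ε = 1 ∨ ε = -1) (δ : ℤ) (hδ : δ = 1 ∨ δ = -1)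
    (Φ : ℤ → ℝ → ℝ → (Fin N → ℝ))
    (A B : ℝ → Matrix (Fin N) (Fin N) ℝ)
    (hreg : ∀ n, ContDiff ℝ 2 (fun p : ℝ × ℝ => Φ n p.1 p.2))
    (hx : ∀ n (x s : ℝ), deriv (fun x' => Φ n x' s) x =
        ε • Φ (n + δ) x s + (A x).mulVec (Φ n x s))
    (hs : ∀ n (x s : ℝ), deriv (fun s' => Φ n x s') s =
        (-ε) • Φ (n - δ) x s + (B s).mulVec (Φ n x s)) :
    ∀ (n : ℤ) (x s : ℝ), (A x * B s - B s * A x).mulVec (Φ n x s) = 0 := by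
  intro n x s
  set f : ℤ → ℝ × ℝ → (Fin N → ℝ) := fun m p => Φ m p.1 p.2 with hf
  have hd : ∀ m, Differentiable ℝ (f m) := fun m => (hreg m).differentiable two_ne_zero
  -- one-variable HasDerivAt facts
  have hDs : ∀ m (x s : ℝ), HasDerivAt (fun s' => Φ m x s')
      ((-ε) • Φ (m - δ) x s + (B s).mulVec (Φ m x s)) s := by
    intro m x s
    have h := (hd m (x, s)).hasFDerivAt.comp_hasDerivAt s
      ((hasDerivAt_const s x).prodMk (hasDerivAt_id s))
    have h2 : deriv (fun s' => Φ m x s') s = fderiv ℝ (f m) (x, s) (0, 1) :=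
      aux_derivs (hd m (x, s))
    rw [hs m x s] at h2
    simpa [← h2, Function.comp_def] using h
  have hDx : ∀ m (x s : ℝ), HasDerivAt (fun x' => Φ m x' s)
      (ε • Φ (m + δ) x s + (A x).mulVec (Φ m x s)) x := by
    intro m x s
    have h := (hd m (x, s)).hasFDerivAt.comp_hasDerivAt x
      ((hasDerivAt_id x).prodMk (hasDerivAt_const x s))
    have h2 : deriv (fun x' => Φ m x' s) x = fderiv ℝ (f m) (x, s) (1, 0) :=
      aux_derivx (hd m (x, s))
    rw [hx m x s] at h2
    simpa [← h2, Function.comp_def] using h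
  -- derivative of mulVec composed with a curve
  have hmul : ∀ (M : Matrix (Fin N) (Fin N) ℝ) {u : ℝ → (Fin N → ℝ)} {u' : Fin N → ℝ} {t : ℝ},
      HasDerivAt u u' t → HasDerivAt (fun t' => M.mulVec (u t')) (M.mulVec u') t := by
    intro M u u' t hu
    have := (LinearMap.toContinuousLinearMap M.mulVecLin).hasFDerivAt.comp_hasDerivAt t hu
    simpa [Function.comp_def] using this
  -- first mixed derivative (d/ds of d/dx)
  have E1 : deriv (fun s' => deriv (fun x' => Φ n x' s') x) s =
      ε • ((-ε) • Φ n x s + (B s).mulVec (Φ (n + δ) x s)) +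
        (A x).mulVec ((-ε) • Φ (n - δ) x s + (B s).mulVec (Φ n x s)) := by
    have hfun : (fun s' => deriv (fun x' => Φ n x' s') x) =
        fun s' => ε • Φ (n + δ) x s' + (A x).mulVec (Φ n x s') := by
      funext s'; exact hx n x s'
    rw [hfun]
    have h1 := ((hDs (n + δ) x s).const_smul ε).add (hmul (A x) (hDs n x s))
    rw [add_sub_cancel_right] at h1
    exact h1.deriv
  -- second mixed derivative (d/dx of d/ds)
  have E2 : deriv (fun x' => deriv (fun s' => Φ n x' s') s) x =
      (-ε) • (ε • Φ n x s + (A x).mulVec (Φ (n - δ) x s)) +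
        (B s).mulVec (ε • Φ (n + δ) x s + (A x).mulVec (Φ n x s)) := by
    have hfun : (fun x' => deriv (fun s' => Φ n x' s') s) =
        fun x' => (-ε) • Φ (n - δ) x' s + (B s).mulVec (Φ n x' s) := by
      funext x'; exact hs n x' s
    rw [hfun]
    have h1 := ((hDx (n - δ) x s).const_smul (-ε)).add (hmul (B s) (hDx n x s))
    rw [sub_add_cancel] at h1
    exact h1.deriv
  -- symmetry of mixed derivatives
  have hsymm : deriv (fun s' => deriv (fun x' => Φ n x' s') x) s =
      deriv (fun x' => deriv (fun s' => Φ n x' s') s) x := by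
    have ha : (fun s' => deriv (fun x' => Φ n x' s') x) =
        fun s' => fderiv ℝ (f n) (x, s') (1, 0) := by
      funext s'; exact aux_derivx (hd n (x, s'))
    have hb : (fun x' => deriv (fun s' => Φ n x' s') s) =
        fun x' => fderiv ℝ (f n) (x', s) (0, 1) := by
      funext x'; exact aux_derivs (hd n (x', s))
    rw [ha, hb, aux_mixed_s (hreg n) x s, aux_mixed_x (hreg n) x s]
    exact ((hreg n).contDiffAt.isSymmSndFDerivAt (by norm_num)) (0, 1) (1, 0)
  -- conclude
  have key := E1 ▸ E2 ▸ hsymm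
  funext i
  have h := congrFun key i
  simp only [Matrix.sub_mulVec, ← Matrix.mulVec_mulVec, Pi.sub_apply, Pi.zero_apply,
    sub_eq_zero]
  simp only [Matrix.mulVec_add, Matrix.mulVec_smul, smul_add, Pi.add_apply, Pi.smul_apply,
    smul_eq_mul] at h
  linear_combination h
end

section
/- Let ε ∈ {1, −1}, δ ∈ {1, −1}, N ≥ 1. Suppose Φ : ℤ × ℝ × ℝ → ℝ^N is twice continuously differentiable in (x,s), A : ℝ → Matrix(N,N,ℝ) and B : ℝ → Matrix(N,N,ℝ) are functions, and for all n ∈ ℤ, x, s ∈ ℝ: ∂Φ(n,x,s)/∂x = ε Φ(n+δ,x,s) + A(x) Φ(n,x,s) and ∂Φ(n,x,s)/∂s = −ε Φ(n−δ,x,s) + B(s) Φ(n,x,s). If at a point (x₀, s₀) the matrices do not commute, i.e. A(x₀) B(s₀) ≠ B(s₀) A(x₀), then the Casorati determinant vanishes there: for every n ∈ ℤ, det( (Φ_i(n+j−1, x₀, s₀))_{1≤i,j≤N} ) = 0, where Φ_i denotes the i-th component of Φ. -/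
/-- if the coefficient matrices of the coupled linear differential-difference
system do not commute at a point `(x₀, s₀)`, then the Casorati determinant vanishes there. -/
theorem casoratian_eq_zero_of_not_commute
    (N : ℕ) (hN : 1 ≤ N) (ε : ℝ) (hε : ε = 1 ∨ ε = -1) (δ : ℤ) (hδ : δ = 1 ∨ δ = -1)
    (Φ : ℤ → ℝ → ℝ → (Fin N → ℝ))
    (A B : ℝ → Matrix (Fin N) (Fin N) ℝ)
    (hreg : ∀ n, ContDiff ℝ 2 (fun p : ℝ × ℝ => Φ n p.1 p.2))
    (hx : ∀ n (x s : ℝ), deriv (fun x' => Φ n x' s) x =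
        ε • Φ (n + δ) x s + (A x).mulVec (Φ n x s))
    (hs : ∀ n (x s : ℝ), deriv (fun s' => Φ n x s') s =
        (-ε) • Φ (n - δ) x s + (B s).mulVec (Φ n x s))
    (x₀ s₀ : ℝ) (hnc : A x₀ * B s₀ ≠ B s₀ * A x₀) :
    ∀ n : ℤ, Matrix.det (Matrix.of fun i j : Fin N => Φ (n + (j.1 : ℤ)) x₀ s₀ i) = 0 := by
  set u : ℤ → ℝ × ℝ → (Fin N → ℝ) := fun n p => Φ n p.1 p.2 with hu
  have hdiff : ∀ n, Differentiable ℝ (u n) := fun n => (hreg n).differentiable two_ne_zero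
  have hfd : ∀ n p, HasFDerivAt (u n) (fderiv ℝ (u n) p) p := fun n p => (hdiff n p).hasFDerivAt
  have hdiff2 : ∀ n, Differentiable ℝ (fderiv ℝ (u n)) := fun n =>
    ((hreg n).fderiv_right (m := 1) (by norm_num)).differentiable one_ne_zero
  -- coordinate lines
  have hlinex : ∀ (s x : ℝ), HasDerivAt (fun x' : ℝ => ((x' : ℝ), s)) ((1 : ℝ), (0 : ℝ)) x :=
    fun s x => HasDerivAt.prodMk (hasDerivAt_id x) (hasDerivAt_const x s)
  have hlines : ∀ (x s : ℝ), HasDerivAt (fun s' : ℝ => ((x : ℝ), (s' : ℝ))) ((0 : ℝ), (1 : ℝ)) s :=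
    fun x s => HasDerivAt.prodMk (hasDerivAt_const s x) (hasDerivAt_id s)
  -- identify partial derivatives
  have hpx : ∀ n (x s : ℝ), fderiv ℝ (u n) (x, s) (1, 0)
      = ε • Φ (n + δ) x s + (A x).mulVec (Φ n x s) := by
    intro n x s
    have h := (hfd n (x, s)).comp_hasDerivAt x (hlinex s x)
    have h' : deriv (fun x' => Φ n x' s) x = fderiv ℝ (u n) (x, s) (1, 0) := h.deriv
    rw [← h', hx]
  have hps : ∀ n (x s : ℝ), fderiv ℝ (u n) (x, s) (0, 1)
      = (-ε) • Φ (n - δ) x s + (B s).mulVec (Φ n x s) := by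
    intro n x s
    have h := (hfd n (x, s)).comp_hasDerivAt s (hlines x s)
    have h' : deriv (fun s' => Φ n x s') s = fderiv ℝ (u n) (x, s) (0, 1) := h.deriv
    rw [← h', hs]
  -- derivatives of Φ along coordinate lines as HasDerivAt
  have hΦx : ∀ m (x s : ℝ), HasDerivAt (fun x' => Φ m x' s)
      (ε • Φ (m + δ) x s + (A x).mulVec (Φ m x s)) x := by
    intro m x s
    have h := (hfd m (x, s)).comp_hasDerivAt x (hlinex s x)
    rw [hpx m x s] at h; exact h
  have hΦs : ∀ m (x s : ℝ), HasDerivAt (fun s' => Φ m x s')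
      ((-ε) • Φ (m - δ) x s + (B s).mulVec (Φ m x s)) s := by
    intro m x s
    have h := (hfd m (x, s)).comp_hasDerivAt s (hlines x s)
    rw [hps m x s] at h; exact h
  -- symmetry of the second derivative
  have hsymm : ∀ n, fderiv ℝ (fderiv ℝ (u n)) (x₀, s₀) (0, 1) (1, 0)
      = fderiv ℝ (fderiv ℝ (u n)) (x₀, s₀) (1, 0) (0, 1) := fun n =>
    second_derivative_symmetric (hfd n) ((hdiff2 n (x₀, s₀)).hasFDerivAt) (0, 1) (1, 0)
  -- derivative of an evaluated fderiv along a line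
  have heval : ∀ n (v w : ℝ × ℝ) (t : ℝ) (γ : ℝ → ℝ × ℝ),
      HasDerivAt γ w t → γ t = (x₀, s₀) →
      HasDerivAt (fun t' => fderiv ℝ (u n) (γ t') v)
        (fderiv ℝ (fderiv ℝ (u n)) (x₀, s₀) w v) t := by
    intro n v w t γ hγ hγt
    have h1 : HasFDerivAt (fun p => (ContinuousLinearMap.apply ℝ (Fin N → ℝ) v) (fderiv ℝ (u n) p))
        ((ContinuousLinearMap.apply ℝ (Fin N → ℝ) v).comp (fderiv ℝ (fderiv ℝ (u n)) (γ t)))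
        (γ t) :=
      ((ContinuousLinearMap.apply ℝ (Fin N → ℝ) v).hasFDerivAt).comp (γ t)
        ((hdiff2 n (γ t)).hasFDerivAt)
    have := h1.comp_hasDerivAt t hγ
    rw [hγt] at this
    exact this
  -- multiplication by a matrix preserves HasDerivAt
  have hAlin : ∀ (M : Matrix (Fin N) (Fin N) ℝ) {f : ℝ → Fin N → ℝ} {f' : Fin N → ℝ} {t : ℝ},
      HasDerivAt f f' t → HasDerivAt (fun t' => M.mulVec (f t')) (M.mulVec f') t := by
    intro M f f' t hf
    have := (LinearMap.toContinuousLinearMap M.mulVecLin).hasFDerivAt.comp_hasDerivAt t hf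
    exact this
  -- key commutation identity
  have key : ∀ n, (A x₀ * B s₀ - B s₀ * A x₀).mulVec (Φ n x₀ s₀) = 0 := by
    intro n
    have h1 : HasDerivAt (fun s' => fderiv ℝ (u n) (x₀, s') (1, 0))
        (fderiv ℝ (fderiv ℝ (u n)) (x₀, s₀) (0, 1) (1, 0)) s₀ :=
      heval n (1, 0) (0, 1) s₀ _ (hlines x₀ s₀) rfl
    have h1' : HasDerivAt (fun s' => fderiv ℝ (u n) (x₀, s') (1, 0))
        (ε • ((-ε) • Φ (n + δ - δ) x₀ s₀ + (B s₀).mulVec (Φ (n + δ) x₀ s₀))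
          + (A x₀).mulVec ((-ε) • Φ (n - δ) x₀ s₀ + (B s₀).mulVec (Φ n x₀ s₀))) s₀ := by
      have hfun : (fun s' => fderiv ℝ (u n) (x₀, s') (1, 0))
          = fun s' => ε • Φ (n + δ) x₀ s' + (A x₀).mulVec (Φ n x₀ s') := by
        funext s'; exact hpx n x₀ s'
      rw [hfun]
      exact ((hΦs (n + δ) x₀ s₀).const_smul ε).add (hAlin (A x₀) (hΦs n x₀ s₀))
    have e1 := h1.unique h1'
    have h2 : HasDerivAt (fun x' => fderiv ℝ (u n) (x', s₀) (0, 1))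
        (fderiv ℝ (fderiv ℝ (u n)) (x₀, s₀) (1, 0) (0, 1)) x₀ :=
      heval n (0, 1) (1, 0) x₀ _ (hlinex s₀ x₀) rfl
    have h2' : HasDerivAt (fun x' => fderiv ℝ (u n) (x', s₀) (0, 1))
        ((-ε) • (ε • Φ (n - δ + δ) x₀ s₀ + (A x₀).mulVec (Φ (n - δ) x₀ s₀))
          + (B s₀).mulVec (ε • Φ (n + δ) x₀ s₀ + (A x₀).mulVec (Φ n x₀ s₀))) x₀ := by
      have hfun : (fun x' => fderiv ℝ (u n) (x', s₀) (0, 1))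
          = fun x' => (-ε) • Φ (n - δ) x' s₀ + (B s₀).mulVec (Φ n x' s₀) := by
        funext x'; exact hps n x' s₀
      rw [hfun]
      exact ((hΦx (n - δ) x₀ s₀).const_smul (-ε)).add (hAlin (B s₀) (hΦx n x₀ s₀))
    have e2 := h2.unique h2'
    have e3 : ε • ((-ε) • Φ (n + δ - δ) x₀ s₀ + (B s₀).mulVec (Φ (n + δ) x₀ s₀))
          + (A x₀).mulVec ((-ε) • Φ (n - δ) x₀ s₀ + (B s₀).mulVec (Φ n x₀ s₀))
        = (-ε) • (ε • Φ (n - δ + δ) x₀ s₀ + (A x₀).mulVec (Φ (n - δ) x₀ s₀))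
          + (B s₀).mulVec (ε • Φ (n + δ) x₀ s₀ + (A x₀).mulVec (Φ n x₀ s₀)) := by
      rw [← e1, ← e2, hsymm n]
    have hnd : n + δ - δ = n := by ring
    have hnd' : n - δ + δ = n := by ring
    rw [hnd, hnd'] at e3
    simp only [Matrix.mulVec_add, Matrix.mulVec_smul, Matrix.mulVec_mulVec,
      Matrix.sub_mulVec] at e3 ⊢
    linear_combination (norm := module) e3
  -- deduce the determinant vanishes
  intro n
  by_contra hdet
  set M : Matrix (Fin N) (Fin N) ℝ := Matrix.of fun i j : Fin N => Φ (n + (j.1 : ℤ)) x₀ s₀ i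
    with hM
  set C : Matrix (Fin N) (Fin N) ℝ := A x₀ * B s₀ - B s₀ * A x₀ with hC
  have hCM : C * M = 0 := by
    ext i j
    have h := congrFun (key (n + (j.1 : ℤ))) i
    simpa [Matrix.mul_apply, Matrix.mulVec, dotProduct, hM] using h
  have hMunit : IsUnit M.det := isUnit_iff_ne_zero.mpr hdet
  have hC0 : C = 0 := by
    calc C = C * (M * M⁻¹) := by rw [Matrix.mul_nonsing_inv M hMunit, mul_one]
    _ = (C * M) * M⁻¹ := by rw [mul_assoc]
    _ = 0 := by rw [hCM, zero_mul]
  exact hnc (sub_eq_zero.mp hC0)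
end

section
/- Let ε ∈ {1, −1}, δ ∈ {1, −1}, N ≥ 1, and let p_1, …, p_N be nonzero real numbers and q_1, …, q_N real numbers. Suppose A : ℝ → Matrix(N,N,ℝ) and B : ℝ → Matrix(N,N,ℝ) are continuous and satisfy, for all x, s ∈ ℝ: A(x) B(s) = B(s) A(x), A(x)·(∫₀ˣ A(x') dx') = (∫₀ˣ A(x') dx')·A(x), and B(s)·(∫₀ˢ B(s') ds') = (∫₀ˢ B(s') ds')·B(s). Define Φ(n,x,s) = exp(∫₀ˣ A(x') dx' + ∫₀ˢ B(s') ds') · v(n,x,s), where exp is the matrix exponential and v(n,x,s) ∈ ℝ^N has i-th component p_i^n · exp(ε(p_i^δ x − p_i^{−δ} s) + q_i). Then for all n ∈ ℤ and x, s ∈ ℝ: ∂Φ(n,x,s)/∂x = ε Φ(n+δ,x,s) + A(x) Φ(n,x,s) and ∂Φ(n,x,s)/∂s = −ε Φ(n−δ,x,s) + B(s) Φ(n,x,s). -/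
/-- The entrywise integral `∫₀ˣ A(x') dx'` of a matrix-valued function. -/
noncomputable def matIntegral {N : ℕ} (A : ℝ → Matrix (Fin N) (Fin N) ℝ) (x : ℝ) :
    Matrix (Fin N) (Fin N) ℝ :=
  Matrix.of fun i j => ∫ t in (0:ℝ)..x, A t i j

section AuxSection

open scoped Matrix
open NormedSpace Metric Filter Set Nat

attribute [local instance] Matrix.linftyOpNormedAddCommGroup Matrix.linftyOpNormedSpace
  Matrix.linftyOpNormedRing Matrix.linftyOpNormedAlgebra

/-- Derivative of `t ↦ exp (G t)` when `G' t` commutes with `G t` at every point. -/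
theorem aux_exp_hasDerivAt {𝔸 : Type*} [NormedRing 𝔸] [NormedAlgebra ℝ 𝔸] [CompleteSpace 𝔸]
    {G G' : ℝ → 𝔸} (hG : ∀ t, HasDerivAt G (G' t) t) (hG'c : Continuous G')
    (hc : ∀ t, Commute (G' t) (G t)) (x : ℝ) :
    HasDerivAt (fun t => exp (G t)) (G' x * exp (G x)) x := by
  have hGc : Continuous G := by
    rw [continuous_iff_continuousAt]; exact fun t => (hG t).continuousAt
  obtain ⟨C, hC⟩ := (isCompact_closedBall x 1).exists_bound_of_continuousOn hGc.continuousOn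
  obtain ⟨C', hC'⟩ := (isCompact_closedBall x 1).exists_bound_of_continuousOn hG'c.continuousOn
  set D : ℝ := max C 1 with hD
  set C'' : ℝ := max C' 0 with hC''
  have hD1 : (1:ℝ) ≤ D := le_max_right _ _
  have hD0 : (0:ℝ) ≤ D := le_trans zero_le_one hD1
  have hC''0 : (0:ℝ) ≤ C'' := le_max_right _ _
  -- derivative of powers
  have hpow : ∀ (m : ℕ) (t : ℝ),
      HasDerivAt (fun u => G u ^ (m + 1)) (((m : ℝ) + 1) • (G' t * G t ^ m)) t := by
    intro m
    induction m with
    | zero => intro t; simpa using hG t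
    | succ m ih =>
      intro t
      have h1 := (hG t).mul (ih t)
      have h2 : (G * fun u => G u ^ (m + 1)) = fun u => G u ^ (m + 1 + 1) := by
        funext u; show G u * G u ^ (m + 1) = _; rw [← _root_.pow_succ']
      rw [h2] at h1
      have e1 : G t * (G' t * G t ^ m) = G' t * G t ^ (m + 1) := by
        rw [← mul_assoc, ← (hc t).eq, mul_assoc, ← _root_.pow_succ']
      have e2 : (((m:ℝ) + 1 + 1)) • (G' t * G t ^ (m + 1))
          = G' t * G t ^ (m + 1) + G t * (((m:ℝ) + 1) • (G' t * G t ^ m)) := by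
        rw [mul_smul_comm, e1, add_smul, one_smul, add_comm]
      have : (((m + 1 : ℕ) : ℝ) + 1) • (G' t * G t ^ (m + 1))
          = G' t * G t ^ (m + 1) + G t * (((m:ℝ) + 1) • (G' t * G t ^ m)) := by
        push_cast
        exact e2
      rw [this]
      exact h1
  -- derivative of each series term
  have hderiv : ∀ (nn : ℕ) (t : ℝ),
      HasDerivAt (fun u => (nn ! : ℝ)⁻¹ • G u ^ nn)
        ((nn ! : ℝ)⁻¹ • ((nn : ℝ) • (G' t * G t ^ (nn - 1)))) t := by
    intro nn t
    cases nn with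
    | zero =>
      simp only [pow_zero, Nat.factorial_zero, Nat.cast_one, inv_one, one_smul, Nat.cast_zero,
        zero_smul, smul_zero]
      exact hasDerivAt_const _ _
    | succ m =>
      have := (hpow m t).const_smul (((m + 1)! : ℝ)⁻¹)
      simpa [Nat.add_sub_cancel, Pi.smul_def] using this
  -- bound on the derivatives
  have hAbound : ∀ (m : ℕ) (t : ℝ), t ∈ closedBall x 1 → ‖G' t * G t ^ m‖ ≤ C'' * D ^ m := by
    intro m t ht
    cases m with
    | zero =>
      simp only [pow_zero, mul_one]
      exact le_trans (hC' t ht) (le_max_left _ _)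
    | succ m =>
      calc ‖G' t * G t ^ (m + 1)‖ ≤ ‖G' t‖ * ‖G t ^ (m + 1)‖ := norm_mul_le _ _
        _ ≤ C'' * D ^ (m + 1) := by
          have h1 : ‖G t ^ (m+1)‖ ≤ ‖G t‖ ^ (m+1) := norm_pow_le' _ (Nat.succ_pos m)
          have h2 : ‖G t‖ ^ (m+1) ≤ D ^ (m+1) :=
            pow_le_pow_left₀ (norm_nonneg _) (le_trans (hC t ht) (le_max_left _ _)) _
          have h3 : ‖G' t‖ ≤ C'' := le_trans (hC' t ht) (le_max_left _ _)
          exact mul_le_mul h3 (le_trans h1 h2) (norm_nonneg _) hC''0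
  set u : ℕ → ℝ := fun nn =>
    Nat.casesOn nn 0 (fun m => ((m + 1)! : ℝ)⁻¹ * (((m:ℝ) + 1) * (C'' * D ^ m))) with hu_def
  have hb : ∀ (nn : ℕ) (t : ℝ), t ∈ ball x 1 →
      ‖(nn ! : ℝ)⁻¹ • ((nn : ℝ) • (G' t * G t ^ (nn - 1)))‖ ≤ u nn := by
    intro nn t ht
    have ht' : t ∈ closedBall x 1 := ball_subset_closedBall ht
    cases nn with
    | zero => simp [hu_def]
    | succ m =>
      have hfac : (0:ℝ) ≤ ((m + 1)! : ℝ)⁻¹ := by positivity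
      calc ‖((m+1)! : ℝ)⁻¹ • (((m+1 : ℕ) : ℝ) • (G' t * G t ^ (m + 1 - 1)))‖
          = ((m+1)! : ℝ)⁻¹ * (((m:ℝ) + 1) * ‖G' t * G t ^ m‖) := by
            rw [norm_smul, norm_smul, Real.norm_eq_abs, Real.norm_eq_abs,
              abs_of_nonneg hfac, abs_of_nonneg (by positivity), Nat.add_sub_cancel]
            push_cast
            ring
        _ ≤ ((m + 1)! : ℝ)⁻¹ * (((m:ℝ) + 1) * (C'' * D ^ m)) := by
            have := hAbound m t ht'
            gcongr
        _ = u (m + 1) := rfl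
  have hu : Summable u := by
    rw [← summable_nat_add_iff 1]
    have : (fun n : ℕ => u (n + 1)) = fun n => C'' * (D ^ n / n !) := by
      funext m
      show ((m + 1)! : ℝ)⁻¹ * (((m:ℝ) + 1) * (C'' * D ^ m)) = C'' * (D ^ m / m !)
      have h2 : ((m !) : ℝ) ≠ 0 := Nat.cast_ne_zero.2 (Nat.factorial_ne_zero m)
      have h1 : ((m:ℝ) + 1) ≠ 0 := by positivity
      rw [Nat.factorial_succ]
      push_cast
      field_simp
    rw [this]
    exact (Real.summable_pow_div_factorial D).mul_left C''
  have hsum : Summable (fun nn : ℕ => (nn ! : ℝ)⁻¹ • ((nn : ℝ) • (G' x * G x ^ (nn - 1)))) :=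
    Summable.of_norm_bounded hu (fun nn => hb nn x (mem_ball_self one_pos))
  have H := hasDerivAt_tsum_of_isPreconnected hu isOpen_ball
    ((convex_ball x 1).isPreconnected)
    (fun nn y _ => hderiv nn y) (fun nn y hy => hb nn y hy) (mem_ball_self one_pos)
    (expSeries_summable' (𝕂 := ℝ) (G x)) (mem_ball_self one_pos)
  have hts : (∑' nn : ℕ, (nn ! : ℝ)⁻¹ • ((nn : ℝ) • (G' x * G x ^ (nn - 1))))
      = G' x * exp (G x) := by
    rw [Summable.tsum_eq_zero_add hsum]
    have h0 : ((0:ℕ)! : ℝ)⁻¹ • (((0:ℕ) : ℝ) • (G' x * G x ^ (0 - 1))) = 0 := by simp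
    rw [h0, zero_add]
    have hterm : ∀ m : ℕ, (((m+1) : ℕ)! : ℝ)⁻¹ • ((((m+1) : ℕ) : ℝ) • (G' x * G x ^ (m + 1 - 1)))
        = G' x * ((m ! : ℝ)⁻¹ • G x ^ m) := by
      intro m
      rw [Nat.add_sub_cancel, smul_smul, mul_smul_comm]
      congr 1
      rw [Nat.factorial_succ]
      have h2 : ((m !) : ℝ) ≠ 0 := Nat.cast_ne_zero.2 (Nat.factorial_ne_zero m)
      have h1 : ((m:ℝ) + 1) ≠ 0 := by positivity
      push_cast
      field_simp
    simp only [hterm]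
    rw [(expSeries_summable' (𝕂 := ℝ) (G x)).tsum_mul_left (G' x), exp_eq_tsum ℝ]
  rw [← hts]
  have hfun : (fun t => exp (G t)) = fun z => ∑' nn : ℕ, (nn ! : ℝ)⁻¹ • G z ^ nn := by
    funext z; rw [exp_eq_tsum ℝ]
  rw [hfun]
  exact H

/-- Entrywise derivatives give the derivative of a matrix-valued function. -/
theorem aux_hasDerivAt_of_entries {N : ℕ} {F : ℝ → Matrix (Fin N) (Fin N) ℝ}
    {F' : Matrix (Fin N) (Fin N) ℝ} {x : ℝ}
    (h : ∀ i j, HasDerivAt (fun t => F t i j) (F' i j) x) :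
    HasDerivAt F F' x := by
  refine hasDerivAt_iff_tendsto_slope.2 ?_
  have h' : ∀ i j, Filter.Tendsto (fun y => slope (fun t => F t i j) x y)
      (nhdsWithin x {x}ᶜ) (nhds (F' i j)) :=
    fun i j => hasDerivAt_iff_tendsto_slope.1 (h i j)
  exact tendsto_pi_nhds.2 fun i => tendsto_pi_nhds.2 fun j =>
    (h' i j).congr fun y => rfl

/-- Entries of a differentiable matrix-valued function are differentiable. -/
theorem aux_entry_hasDerivAt {N : ℕ} {F : ℝ → Matrix (Fin N) (Fin N) ℝ}
    {F' : Matrix (Fin N) (Fin N) ℝ} {x : ℝ} (h : HasDerivAt F F' x) (i j : Fin N) :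
    HasDerivAt (fun t => F t i j) (F' i j) x := by
  replace h := hasDerivAt_iff_tendsto_slope.1 h
  refine hasDerivAt_iff_tendsto_slope.2 ?_
  have hcont : Continuous fun m : Matrix (Fin N) (Fin N) ℝ => m i j := by
    exact (continuous_apply j).comp (continuous_apply i)
  exact ((hcont.tendsto F').comp h).congr fun y => rfl

/-- The fundamental theorem of calculus for `matIntegral`. -/
theorem aux_matIntegral_hasDerivAt {N : ℕ} {C : ℝ → Matrix (Fin N) (Fin N) ℝ}
    (hC : Continuous C) (x : ℝ) :
    HasDerivAt (fun t => matIntegral C t) (C x) x := by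
  apply aux_hasDerivAt_of_entries
  intro i j
  have hent : Continuous fun t => C t i j := by
    have h1 : Continuous fun m : Matrix (Fin N) (Fin N) ℝ => m i j := by
      exact (continuous_apply j).comp (continuous_apply i)
    exact h1.comp hC
  exact intervalIntegral.integral_hasDerivAt_right (hent.intervalIntegrable _ _)
    (hent.stronglyMeasurableAtFilter _ _) hent.continuousAt

/-- A matrix commuting with every value of a continuous family commutes with its integral. -/
theorem aux_comm_matIntegral {N : ℕ} {C : ℝ → Matrix (Fin N) (Fin N) ℝ} (hC : Continuous C)
    (D : Matrix (Fin N) (Fin N) ℝ) (h : ∀ t, D * C t = C t * D) (s : ℝ) :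
    D * matIntegral C s = matIntegral C s * D := by
  have hent : ∀ k l : Fin N, Continuous fun t => C t k l := by
    intro k l
    have h1 : Continuous fun m : Matrix (Fin N) (Fin N) ℝ => m k l := by
      exact (continuous_apply l).comp (continuous_apply k)
    exact h1.comp hC
  ext i j
  simp only [Matrix.mul_apply, matIntegral, Matrix.of_apply]
  have hL : ∀ k : Fin N, D i k * ∫ t in (0:ℝ)..s, C t k j
      = ∫ t in (0:ℝ)..s, D i k * C t k j :=
    fun k => (intervalIntegral.integral_const_mul _ _).symm
  have hR : ∀ k : Fin N, (∫ t in (0:ℝ)..s, C t i k) * D k j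
      = ∫ t in (0:ℝ)..s, C t i k * D k j :=
    fun k => (intervalIntegral.integral_mul_const _ _).symm
  rw [Finset.sum_congr rfl (fun k _ => hL k), Finset.sum_congr rfl (fun k _ => hR k),
    ← intervalIntegral.integral_finset_sum
      (f := fun k t => D i k * C t k j)
      (fun k _ => (continuous_const.mul (hent k j)).intervalIntegrable _ _),
    ← intervalIntegral.integral_finset_sum
      (f := fun k t => C t i k * D k j)
      (fun k _ => ((hent i k).mul continuous_const).intervalIntegrable _ _)]
  congr 1
  funext t
  have := congrFun (congrFun (h t) i) j
  simpa [Matrix.mul_apply] using this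

/-- Derivative of the entries of `exp (∫₀ᵗ C + K)`. -/
theorem aux_exp_entry {N : ℕ} (C : ℝ → Matrix (Fin N) (Fin N) ℝ) (hC : Continuous C)
    (K : Matrix (Fin N) (Fin N) ℝ)
    (hCint : ∀ t, C t * matIntegral C t = matIntegral C t * C t)
    (hCK : ∀ t, C t * K = K * C t) (x : ℝ) (i j : Fin N) :
    HasDerivAt (fun t => exp (matIntegral C t + K) i j)
      ((C x * exp (matIntegral C x + K)) i j) x := by
  have hG : ∀ t, HasDerivAt (fun u => matIntegral C u + K) (C t) t :=
    fun t => (aux_matIntegral_hasDerivAt hC t).add_const K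
  have hcomm : ∀ t, Commute (C t) (matIntegral C t + K) := by
    intro t
    have : C t * (matIntegral C t + K) = (matIntegral C t + K) * C t := by
      rw [mul_add, add_mul, hCint t, hCK t]
    exact this
  exact aux_entry_hasDerivAt (aux_exp_hasDerivAt hG hC hcomm x) i j

/-- The main vector-level auxiliary statement. -/
theorem aux_main {N : ℕ} (C : ℝ → Matrix (Fin N) (Fin N) ℝ) (hC : Continuous C)
    (K : Matrix (Fin N) (Fin N) ℝ)
    (hCint : ∀ t, C t * matIntegral C t = matIntegral C t * C t)
    (hCK : ∀ t, C t * K = K * C t)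
    (f f' : Fin N → ℝ → ℝ) (x : ℝ)
    (hf : ∀ k, HasDerivAt (f k) (f' k x) x) :
    HasDerivAt (fun t => (exp (matIntegral C t + K)).mulVec (fun k => f k t))
      ((exp (matIntegral C x + K)).mulVec (fun k => f' k x) +
        (C x).mulVec ((exp (matIntegral C x + K)).mulVec (fun k => f k x))) x := by
  have hE : ∀ i j, HasDerivAt (fun t => exp (matIntegral C t + K) i j)
      ((C x * exp (matIntegral C x + K)) i j) x :=
    fun i j => aux_exp_entry C hC K hCint hCK x i j
  refine hasDerivAt_pi.2 fun i => ?_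
  have hterm : ∀ k ∈ Finset.univ, HasDerivAt
      (fun t => exp (matIntegral C t + K) i k * f k t)
      ((C x * exp (matIntegral C x + K)) i k * f k x +
        exp (matIntegral C x + K) i k * f' k x) x :=
    fun k _ => (hE i k).mul (hf k)
  have Hsum := HasDerivAt.fun_sum hterm
  have hfun : (fun t => ((exp (matIntegral C t + K)).mulVec fun k => f k t) i)
      = fun t => ∑ k : Fin N, exp (matIntegral C t + K) i k * f k t := rfl
  show HasDerivAt (fun t => ((exp (matIntegral C t + K)).mulVec fun k => f k t) i) _ x
  rw [hfun]
  refine Hsum.congr_deriv (Eq.symm ?_)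
  rw [Pi.add_apply, Matrix.mulVec_mulVec]
  simp only [Matrix.mulVec, dotProduct]
  rw [← Finset.sum_add_distrib]
  exact Finset.sum_congr rfl fun k _ => by ring

end AuxSection

/-- under the commutation conditions, the explicit vector-valued function
`Φ(n,x,s) = exp(∫₀ˣ A + ∫₀ˢ B) · (pᵢⁿ e^{ε(pᵢ^δ x − pᵢ^{−δ} s) + qᵢ})ᵢ` solves the coupled
linear differential-difference system. -/
theorem explicit_solution_of_linear_system
    (N : ℕ) (hN : 1 ≤ N) (ε : ℝ) (hε : ε = 1 ∨ ε = -1) (δ : ℤ) (hδ : δ = 1 ∨ δ = -1)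
    (p q : Fin N → ℝ) (hp : ∀ i, p i ≠ 0)
    (A B : ℝ → Matrix (Fin N) (Fin N) ℝ) (hA : Continuous A) (hB : Continuous B)
    (hcomm : ∀ x s : ℝ, A x * B s = B s * A x)
    (hAint : ∀ x : ℝ, A x * matIntegral A x = matIntegral A x * A x)
    (hBint : ∀ s : ℝ, B s * matIntegral B s = matIntegral B s * B s)
    (Φ : ℤ → ℝ → ℝ → (Fin N → ℝ))
    (hΦ : ∀ (n : ℤ) (x s : ℝ), Φ n x s =
      (NormedSpace.exp (matIntegral A x + matIntegral B s)).mulVec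
        (fun i => p i ^ n * Real.exp (ε * (p i ^ δ * x - p i ^ (-δ) * s) + q i))) :
    ∀ (n : ℤ) (x s : ℝ),
      HasDerivAt (fun x' => Φ n x' s) (ε • Φ (n + δ) x s + (A x).mulVec (Φ n x s)) x ∧
      HasDerivAt (fun s' => Φ n x s') ((-ε) • Φ (n - δ) x s + (B s).mulVec (Φ n x s)) s := by
  intro n x s
  constructor
  · -- derivative in x
    have hKcomm : ∀ t : ℝ, A t * matIntegral B s = matIntegral B s * A t :=
      fun t => aux_comm_matIntegral hB (A t) (fun u => hcomm t u) s
    simp only [hΦ]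
    have hf : ∀ k : Fin N, HasDerivAt
        (fun x' => p k ^ n * Real.exp (ε * (p k ^ δ * x' - p k ^ (-δ) * s) + q k))
        (ε * p k ^ δ *
          (p k ^ n * Real.exp (ε * (p k ^ δ * x - p k ^ (-δ) * s) + q k))) x := by
      intro k
      have h1 : HasDerivAt (fun x' : ℝ => p k ^ δ * x' - p k ^ (-δ) * s) (p k ^ δ) x := by
        simpa using ((hasDerivAt_id x).const_mul (p k ^ δ)).sub_const (p k ^ (-δ) * s)
      have h2 : HasDerivAt (fun x' : ℝ => ε * (p k ^ δ * x' - p k ^ (-δ) * s) + q k)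
          (ε * p k ^ δ) x := (h1.const_mul ε).add_const (q k)
      have h3 := h2.exp.const_mul (p k ^ n)
      refine h3.congr_deriv ?_
      ring
    have hv : (ε • (NormedSpace.exp (matIntegral A x + matIntegral B s)).mulVec
          (fun i => p i ^ (n + δ) * Real.exp (ε * (p i ^ δ * x - p i ^ (-δ) * s) + q i)) +
        (A x).mulVec ((NormedSpace.exp (matIntegral A x + matIntegral B s)).mulVec
          (fun i => p i ^ n * Real.exp (ε * (p i ^ δ * x - p i ^ (-δ) * s) + q i))))
        = ((NormedSpace.exp (matIntegral A x + matIntegral B s)).mulVec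
            (fun k => ε * p k ^ δ *
              (p k ^ n * Real.exp (ε * (p k ^ δ * x - p k ^ (-δ) * s) + q k))) +
          (A x).mulVec ((NormedSpace.exp (matIntegral A x + matIntegral B s)).mulVec
            (fun k => p k ^ n * Real.exp (ε * (p k ^ δ * x - p k ^ (-δ) * s) + q k)))) := by
      congr 1
      funext i
      simp only [Pi.smul_apply, smul_eq_mul, Matrix.mulVec, dotProduct, Finset.mul_sum]
      refine Finset.sum_congr rfl fun k _ => ?_
      rw [zpow_add₀ (hp k)]
      ring
    rw [hv]
    exact aux_main A hA (matIntegral B s) hAint hKcomm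
      (fun k x' => p k ^ n * Real.exp (ε * (p k ^ δ * x' - p k ^ (-δ) * s) + q k))
      (fun k x' => ε * p k ^ δ *
        (p k ^ n * Real.exp (ε * (p k ^ δ * x' - p k ^ (-δ) * s) + q k))) x hf
  · -- derivative in s
    have hKcomm : ∀ t : ℝ, B t * matIntegral A x = matIntegral A x * B t :=
      fun t => aux_comm_matIntegral hA (B t) (fun u => (hcomm u t).symm) x
    simp only [hΦ]
    simp only [add_comm (matIntegral A x)]
    have hf : ∀ k : Fin N, HasDerivAt
        (fun s' => p k ^ n * Real.exp (ε * (p k ^ δ * x - p k ^ (-δ) * s') + q k))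
        (-ε * p k ^ (-δ) *
          (p k ^ n * Real.exp (ε * (p k ^ δ * x - p k ^ (-δ) * s) + q k))) s := by
      intro k
      have h1 : HasDerivAt (fun s' : ℝ => p k ^ δ * x - p k ^ (-δ) * s') (-(p k ^ (-δ))) s := by
        simpa using ((hasDerivAt_id s).const_mul (p k ^ (-δ))).const_sub (p k ^ δ * x)
      have h2 : HasDerivAt (fun s' : ℝ => ε * (p k ^ δ * x - p k ^ (-δ) * s') + q k)
          (ε * -(p k ^ (-δ))) s := (h1.const_mul ε).add_const (q k)
      have h3 := h2.exp.const_mul (p k ^ n)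
      refine h3.congr_deriv ?_
      ring
    have hv : ((-ε) • (NormedSpace.exp (matIntegral B s + matIntegral A x)).mulVec
          (fun i => p i ^ (n - δ) * Real.exp (ε * (p i ^ δ * x - p i ^ (-δ) * s) + q i)) +
        (B s).mulVec ((NormedSpace.exp (matIntegral B s + matIntegral A x)).mulVec
          (fun i => p i ^ n * Real.exp (ε * (p i ^ δ * x - p i ^ (-δ) * s) + q i))))
        = ((NormedSpace.exp (matIntegral B s + matIntegral A x)).mulVec
            (fun k => -ε * p k ^ (-δ) *
              (p k ^ n * Real.exp (ε * (p k ^ δ * x - p k ^ (-δ) * s) + q k))) +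
          (B s).mulVec ((NormedSpace.exp (matIntegral B s + matIntegral A x)).mulVec
            (fun k => p k ^ n * Real.exp (ε * (p k ^ δ * x - p k ^ (-δ) * s) + q k)))) := by
      congr 1
      funext i
      simp only [Pi.smul_apply, smul_eq_mul, Matrix.mulVec, dotProduct, Finset.mul_sum]
      refine Finset.sum_congr rfl fun k _ => ?_
      have hzp : p k ^ (n - δ) = p k ^ n * p k ^ (-δ) := by
        rw [zpow_sub₀ (hp k), zpow_neg, div_eq_mul_inv]
      rw [hzp]
      ring
    rw [hv]
    exact aux_main B hB (matIntegral A x) hBint hKcomm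
      (fun k s' => p k ^ n * Real.exp (ε * (p k ^ δ * x - p k ^ (-δ) * s') + q k))
      (fun k s' => -ε * p k ^ (-δ) *
        (p k ^ n * Real.exp (ε * (p k ^ δ * x - p k ^ (-δ) * s') + q k))) s hf
end

section
/- Let ε ∈ {1, −1}, δ ∈ {1, −1}, M ≥ 1, let p_j (1 ≤ j ≤ M) be nonzero real numbers and q_j real numbers. For λ ∈ ℝ define φ(n,x,s;λ) = Σ_{j=1}^M p_j^n · exp((ε p_j^δ + λ) x − (ε p_j^{−δ} − λ) s + q_j), and for m ≥ 0 define ψ_m(n,x,s;λ) = (1/m!) ∂^m φ(n,x,s;λ)/∂λ^m, with ψ_{−1} := 0. Then for all m ≥ 0, n ∈ ℤ, x, s ∈ ℝ and λ ∈ ℝ: ∂ψ_m/∂x = ε ψ_m(n+δ) + λ ψ_m(n) + ψ_{m−1}(n) and ∂ψ_m/∂s = −ε ψ_m(n−δ) + λ ψ_m(n) + ψ_{m−1}(n); that is, the vector (ψ_0, ψ_1, …, ψ_k) satisfies the coupled linear differential-difference system whose coefficient matrices A = B are the lower-triangular Jordan block with λ on the diagonal and 1 on the subdiagonal. -/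
/-- the normalized `λ`-derivatives `ψ_m = (1/m!) ∂_λ^m φ` of the exponential sum
`φ(n,x,s;λ) = Σ_j p_jⁿ exp((ε p_j^δ + λ)x − (ε p_j^{−δ} − λ)s + q_j)` satisfy the coupled
linear differential-difference system with Jordan-block coefficient matrices (`ψ_{−1} := 0`). -/
theorem jordan_block_solutions
    (M : ℕ) (hM : 1 ≤ M) (ε : ℝ) (hε : ε = 1 ∨ ε = -1) (δ : ℤ) (hδ : δ = 1 ∨ δ = -1)
    (p : Fin M → ℝ) (hp : ∀ j, p j ≠ 0) (q : Fin M → ℝ)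
    (φ : ℤ → ℝ → ℝ → ℝ → ℝ)
    (hφ : ∀ (n : ℤ) (x s l : ℝ), φ n x s l =
      ∑ j, p j ^ n * Real.exp ((ε * p j ^ δ + l) * x - (ε * p j ^ (-δ) - l) * s + q j))
    (ψ : ℕ → ℤ → ℝ → ℝ → ℝ → ℝ)
    (hψ : ∀ (m : ℕ) (n : ℤ) (x s l : ℝ),
      ψ m n x s l = (1 / (m.factorial : ℝ)) * iteratedDeriv m (fun l' => φ n x s l') l) :
    ∀ (m : ℕ) (n : ℤ) (x s l : ℝ),
      deriv (fun x' => ψ m n x' s l) x =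
        ε * ψ m (n + δ) x s l + l * ψ m n x s l +
          (if m = 0 then 0 else ψ (m - 1) n x s l) ∧
      deriv (fun s' => ψ m n x s' l) s =
        -ε * ψ m (n - δ) x s l + l * ψ m n x s l +
          (if m = 0 then 0 else ψ (m - 1) n x s l) := by
  -- derivative of φ in λ
  have hφl : ∀ (n : ℤ) (x s l : ℝ),
      HasDerivAt (fun l' => φ n x s l') ((x + s) * φ n x s l) l := by
    intro n x s l
    have h1 : HasDerivAt
        (fun l' => ∑ j, p j ^ n *
          Real.exp ((ε * p j ^ δ + l') * x - (ε * p j ^ (-δ) - l') * s + q j))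
        (∑ j, p j ^ n * ((x + s) *
          Real.exp ((ε * p j ^ δ + l) * x - (ε * p j ^ (-δ) - l) * s + q j))) l := by
      apply HasDerivAt.fun_sum
      intro j _
      have h2 : HasDerivAt
          (fun l' => (ε * p j ^ δ + l') * x - (ε * p j ^ (-δ) - l') * s + q j)
          (x + s) l := by
        have := ((((hasDerivAt_const l (ε * p j ^ δ)).add (hasDerivAt_id l)).mul_const x).sub
          (((hasDerivAt_const l (ε * p j ^ (-δ))).sub (hasDerivAt_id l)).mul_const s)).add_const
          (q j)
        exact this.congr_deriv (by ring)
      exact (h2.exp.const_mul _).congr_deriv (by ring)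
    have h3 : (∑ j, p j ^ n * ((x + s) *
        Real.exp ((ε * p j ^ δ + l) * x - (ε * p j ^ (-δ) - l) * s + q j)))
        = (x + s) * φ n x s l := by
      rw [hφ, Finset.mul_sum]; congr 1; ext j; ring
    rw [h3] at h1
    refine h1.congr_of_eventuallyEq ?_
    filter_upwards with l' using hφ n x s l'
  -- iterated derivative formula
  have hiter : ∀ (m : ℕ) (n : ℤ) (x s l : ℝ),
      iteratedDeriv m (fun l' => φ n x s l') l = (x + s) ^ m * φ n x s l := by
    intro m
    induction m with
    | zero => intro n x s l; simp [iteratedDeriv_zero]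
    | succ m ih =>
      intro n x s l
      rw [iteratedDeriv_succ]
      have heq : iteratedDeriv m (fun l' => φ n x s l')
          = fun l' => (x + s) ^ m * φ n x s l' := funext fun l' => ih n x s l'
      rw [heq, ((hφl n x s l).const_mul ((x + s) ^ m)).deriv]
      ring
  have hψ' : ∀ (m : ℕ) (n : ℤ) (x s l : ℝ),
      ψ m n x s l = (x + s) ^ m / (m.factorial : ℝ) * φ n x s l := by
    intro m n x s l; rw [hψ, hiter]; ring
  -- derivative of φ in x
  have hφx : ∀ (n : ℤ) (x s l : ℝ),
      HasDerivAt (fun x' => φ n x' s l) (ε * φ (n + δ) x s l + l * φ n x s l) x := by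
    intro n x s l
    have h1 : HasDerivAt
        (fun x' => ∑ j, p j ^ n *
          Real.exp ((ε * p j ^ δ + l) * x' - (ε * p j ^ (-δ) - l) * s + q j))
        (∑ j, p j ^ n * ((ε * p j ^ δ + l) *
          Real.exp ((ε * p j ^ δ + l) * x - (ε * p j ^ (-δ) - l) * s + q j))) x := by
      apply HasDerivAt.fun_sum
      intro j _
      have h2 : HasDerivAt
          (fun x' => (ε * p j ^ δ + l) * x' - (ε * p j ^ (-δ) - l) * s + q j)
          (ε * p j ^ δ + l) x := by
        have := (((hasDerivAt_id x).const_mul (ε * p j ^ δ + l)).sub_const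
          ((ε * p j ^ (-δ) - l) * s)).add_const (q j)
        exact this.congr_deriv (by ring)
      exact (h2.exp.const_mul _).congr_deriv (by ring)
    have h3 : (∑ j, p j ^ n * ((ε * p j ^ δ + l) *
        Real.exp ((ε * p j ^ δ + l) * x - (ε * p j ^ (-δ) - l) * s + q j)))
        = ε * φ (n + δ) x s l + l * φ n x s l := by
      rw [hφ, hφ, Finset.mul_sum, Finset.mul_sum, ← Finset.sum_add_distrib]
      congr 1; ext j
      rw [zpow_add₀ (hp j)]
      ring
    rw [h3] at h1
    refine h1.congr_of_eventuallyEq ?_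
    filter_upwards with x' using hφ n x' s l
  -- derivative of φ in s
  have hφs : ∀ (n : ℤ) (x s l : ℝ),
      HasDerivAt (fun s' => φ n x s' l) (-ε * φ (n - δ) x s l + l * φ n x s l) s := by
    intro n x s l
    have h1 : HasDerivAt
        (fun s' => ∑ j, p j ^ n *
          Real.exp ((ε * p j ^ δ + l) * x - (ε * p j ^ (-δ) - l) * s' + q j))
        (∑ j, p j ^ n * (-(ε * p j ^ (-δ) - l) *
          Real.exp ((ε * p j ^ δ + l) * x - (ε * p j ^ (-δ) - l) * s + q j))) s := by
      apply HasDerivAt.fun_sum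
      intro j _
      have h2 : HasDerivAt
          (fun s' => (ε * p j ^ δ + l) * x - (ε * p j ^ (-δ) - l) * s' + q j)
          (-(ε * p j ^ (-δ) - l)) s := by
        have := (((hasDerivAt_id s).const_mul (ε * p j ^ (-δ) - l)).const_sub
          ((ε * p j ^ δ + l) * x)).add_const (q j)
        exact this.congr_deriv (by ring)
      exact (h2.exp.const_mul _).congr_deriv (by ring)
    have h3 : (∑ j, p j ^ n * (-(ε * p j ^ (-δ) - l) *
        Real.exp ((ε * p j ^ δ + l) * x - (ε * p j ^ (-δ) - l) * s + q j)))
        = -ε * φ (n - δ) x s l + l * φ n x s l := by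
      rw [hφ, hφ, Finset.mul_sum, Finset.mul_sum, ← Finset.sum_add_distrib]
      congr 1; ext j
      rw [sub_eq_add_neg n δ, zpow_add₀ (hp j)]
      ring
    rw [h3] at h1
    refine h1.congr_of_eventuallyEq ?_
    filter_upwards with s' using hφ n x s' l
  intro m n x s l
  have hfac : ((m.factorial : ℝ)) ≠ 0 := Nat.cast_ne_zero.mpr m.factorial_ne_zero
  constructor
  · -- x derivative
    have hx : HasDerivAt (fun x' => (x' + s) ^ m / (m.factorial : ℝ) * φ n x' s l)
        (((m : ℝ) * (x + s) ^ (m - 1) * 1 / (m.factorial : ℝ)) * φ n x s l +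
          (x + s) ^ m / (m.factorial : ℝ) * (ε * φ (n + δ) x s l + l * φ n x s l)) x := by
      exact ((((hasDerivAt_id x).add_const s).pow m).div_const _).mul (hφx n x s l)
    have hx' : HasDerivAt (fun x' => ψ m n x' s l)
        (((m : ℝ) * (x + s) ^ (m - 1) * 1 / (m.factorial : ℝ)) * φ n x s l +
          (x + s) ^ m / (m.factorial : ℝ) * (ε * φ (n + δ) x s l + l * φ n x s l)) x := by
      refine hx.congr_of_eventuallyEq ?_
      filter_upwards with x' using (hψ' m n x' s l)
    rw [hx'.deriv, hψ' m (n + δ) x s l, hψ' m n x s l]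
    cases m with
    | zero => simp
    | succ k =>
      simp only [Nat.succ_ne_zero, if_false, Nat.succ_sub_one, hψ' k n x s l]
      have hkfac : ((k.factorial : ℝ)) ≠ 0 := Nat.cast_ne_zero.mpr k.factorial_ne_zero
      rw [Nat.factorial_succ]
      push_cast
      field_simp
      ring
  · -- s derivative
    have hs : HasDerivAt (fun s' => (x + s') ^ m / (m.factorial : ℝ) * φ n x s' l)
        (((m : ℝ) * (x + s) ^ (m - 1) * 1 / (m.factorial : ℝ)) * φ n x s l +
          (x + s) ^ m / (m.factorial : ℝ) * (-ε * φ (n - δ) x s l + l * φ n x s l)) s := by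
      exact ((((hasDerivAt_id s).const_add x).pow m).div_const _).mul (hφs n x s l)
    have hs' : HasDerivAt (fun s' => ψ m n x s' l)
        (((m : ℝ) * (x + s) ^ (m - 1) * 1 / (m.factorial : ℝ)) * φ n x s l +
          (x + s) ^ m / (m.factorial : ℝ) * (-ε * φ (n - δ) x s l + l * φ n x s l)) s := by
      refine hs.congr_of_eventuallyEq ?_
      filter_upwards with s' using (hψ' m n x s' l)
    rw [hs'.deriv, hψ' m (n - δ) x s l, hψ' m n x s l]
    cases m with
    | zero => simp
    | succ k =>
      simp only [Nat.succ_ne_zero, if_false, Nat.succ_sub_one, hψ' k n x s l]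
      have hkfac : ((k.factorial : ℝ)) ≠ 0 := Nat.cast_ne_zero.mpr k.factorial_ne_zero
      rw [Nat.factorial_succ]
      push_cast
      field_simp
      ring
end
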